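/- arXiv:2007.03731 — 5 statements merged into one kernel-verified Lean document; each statement's English description precedes it below -/
import Mathlib

section
/- Let k be a natural number, p, δ ∈ (0,1), and let N = ⌈(k + 2·ln(1/δ) + √(2k·ln(1/δ)))/p⌉. If X is a binomial random variable with N trials and success probability p, then Pr[X ≤ k] ≤ δ. -/
set_option maxHeartbeats 1000000

lemma aux_exp_neg_le {t : ℝ} (ht : 0 ≤ t) : Real.exp (-t) ≤ 1 - t + t ^ 2 / 2 := by
  have h := Real.quadratic_le_exp_of_nonneg ht
  have hp : (0:ℝ) < 1 + t + t ^ 2 / 2 := by positivity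
  rw [Real.exp_neg]
  calc (Real.exp t)⁻¹ ≤ (1 + t + t ^ 2 / 2)⁻¹ := by
        apply inv_anti₀ hp h
    _ ≤ 1 - t + t ^ 2 / 2 := by
        rw [inv_eq_one_div, div_le_iff₀ hp]
        nlinarith [sq_nonneg (t ^ 2), sq_nonneg t]

theorem stmt_1 (k : ℕ) (p δ : ℝ) (hp : p ∈ Set.Ioo (0 : ℝ) 1) (hδ : δ ∈ Set.Ioo (0 : ℝ) 1)
    (N : ℕ)
    (hN : N = ⌈((k : ℝ) + 2 * Real.log (1 / δ) + Real.sqrt (2 * k * Real.log (1 / δ))) / p⌉₊) :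
    ∑ i ∈ Finset.range (k + 1), (N.choose i : ℝ) * p ^ i * (1 - p) ^ (N - i) ≤ δ := by
  obtain ⟨hp0, hp1⟩ := hp
  obtain ⟨hδ0, hδ1⟩ := hδ
  set L : ℝ := Real.log (1 / δ) with hL
  have hL0 : 0 < L := Real.log_pos (by rw [lt_div_iff₀ hδ0]; linarith)
  set s : ℝ := Real.sqrt (2 * k * L) with hs
  have hs0 : 0 ≤ s := Real.sqrt_nonneg _
  have hs2 : s ^ 2 = 2 * k * L := Real.sq_sqrt (by positivity)
  set a : ℝ := (N : ℝ) * p with ha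
  have hμa : (k : ℝ) + 2 * L + s ≤ a := by
    have h1 : ((k : ℝ) + 2 * L + s) / p ≤ N := by
      rw [hN]; exact Nat.le_ceil _
    calc (k : ℝ) + 2 * L + s = ((k : ℝ) + 2 * L + s) / p * p := by
          field_simp
      _ ≤ (N : ℝ) * p := by gcongr
  have hka : (k : ℝ) < a := by nlinarith [Nat.cast_nonneg (α := ℝ) k]
  have ha0 : 0 < a := lt_of_le_of_lt (Nat.cast_nonneg k) hka
  set t : ℝ := (a - k) / a with htdef
  have ht0 : 0 < t := div_pos (by linarith) ha0
  have hq0 : (0:ℝ) ≤ 1 - p := by linarith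
  -- step 1 : the tail is at most exp(t*k) * (p * exp(-t) + (1-p))^N
  set f : ℕ → ℝ := fun i => Real.exp (t * ((k : ℝ) - i)) * ((N.choose i : ℝ) * p ^ i * (1 - p) ^ (N - i)) with hf
  have hfnonneg : ∀ i, 0 ≤ f i := by
    intro i
    apply mul_nonneg (Real.exp_nonneg _)
    positivity
  have step1 : ∑ i ∈ Finset.range (k + 1), (N.choose i : ℝ) * p ^ i * (1 - p) ^ (N - i)
      ≤ Real.exp (t * k) * (p * Real.exp (-t) + (1 - p)) ^ N := by
    have h1 : ∑ i ∈ Finset.range (k + 1), (N.choose i : ℝ) * p ^ i * (1 - p) ^ (N - i)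
        ≤ ∑ i ∈ Finset.range (k + 1), f i := by
      apply Finset.sum_le_sum
      intro i hi
      have hik : (i : ℝ) ≤ k := by
        exact_mod_cast Nat.lt_succ_iff.mp (Finset.mem_range.mp hi)
      have : (1:ℝ) ≤ Real.exp (t * ((k : ℝ) - i)) := by
        apply Real.one_le_exp
        nlinarith
      have hg : 0 ≤ (N.choose i : ℝ) * p ^ i * (1 - p) ^ (N - i) := by positivity
      calc (N.choose i : ℝ) * p ^ i * (1 - p) ^ (N - i)
          = 1 * ((N.choose i : ℝ) * p ^ i * (1 - p) ^ (N - i)) := (one_mul _).symm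
        _ ≤ f i := mul_le_mul_of_nonneg_right this hg
    have h2 : ∑ i ∈ Finset.range (k + 1), f i ≤ ∑ i ∈ Finset.range (max (k + 1) (N + 1)), f i := by
      apply Finset.sum_le_sum_of_subset_of_nonneg
      · exact Finset.range_subset_range.mpr (le_max_left _ _)
      · intro i _ _; exact hfnonneg i
    have h3 : ∑ i ∈ Finset.range (max (k + 1) (N + 1)), f i = ∑ i ∈ Finset.range (N + 1), f i := by
      symm
      apply Finset.sum_subset (Finset.range_subset_range.mpr (le_max_right _ _))
      intro i _ hi
      have : N < i := by
        simpa [Nat.lt_succ_iff, not_le] using (fun h => hi (Finset.mem_range.mpr (Nat.lt_succ_of_le h)))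
      simp [hf, Nat.choose_eq_zero_of_lt this]
    have h4 : ∑ i ∈ Finset.range (N + 1), f i
        = Real.exp (t * k) * (p * Real.exp (-t) + (1 - p)) ^ N := by
      rw [add_pow, Finset.mul_sum]
      apply Finset.sum_congr rfl
      intro i _
      have he : Real.exp (t * ((k : ℝ) - i)) = Real.exp (t * k) * Real.exp (-t) ^ i := by
        rw [← Real.exp_nat_mul, ← Real.exp_add]
        ring_nf
      rw [hf]
      simp only []
      rw [he, mul_pow]
      ring
    calc _ ≤ ∑ i ∈ Finset.range (k + 1), f i := h1
      _ ≤ ∑ i ∈ Finset.range (max (k + 1) (N + 1)), f i := h2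
      _ = ∑ i ∈ Finset.range (N + 1), f i := h3
      _ = _ := h4
  -- step 2 : (p * exp(-t) + (1-p))^N ≤ exp (a * (exp (-t) - 1))
  have step2 : (p * Real.exp (-t) + (1 - p)) ^ N ≤ Real.exp (a * (Real.exp (-t) - 1)) := by
    have hbase : p * Real.exp (-t) + (1 - p) ≤ Real.exp (p * (Real.exp (-t) - 1)) := by
      have := Real.add_one_le_exp (p * (Real.exp (-t) - 1))
      nlinarith
    have hbase0 : 0 ≤ p * Real.exp (-t) + (1 - p) := by positivity
    calc (p * Real.exp (-t) + (1 - p)) ^ N ≤ Real.exp (p * (Real.exp (-t) - 1)) ^ N :=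
          pow_le_pow_left₀ hbase0 hbase N
      _ = Real.exp (a * (Real.exp (-t) - 1)) := by
          rw [← Real.exp_nat_mul, ha]; ring_nf
  -- step 3 : the exponent bound
  have hexpneg : Real.exp (-t) - 1 ≤ -t + t ^ 2 / 2 := by
    have := aux_exp_neg_le ht0.le
    linarith
  have step3 : t * k + a * (Real.exp (-t) - 1) ≤ -L := by
    have h1 : t * k + a * (Real.exp (-t) - 1) ≤ t * k + a * (-t + t ^ 2 / 2) := by
      have := mul_le_mul_of_nonneg_left hexpneg ha0.le
      linarith
    have h2 : t * k + a * (-t + t ^ 2 / 2) = -((a - k) ^ 2 / (2 * a)) := by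
      rw [htdef]; field_simp; ring
    have h3 : 2 * L * a ≤ (a - k) ^ 2 := by
      nlinarith [mul_nonneg (sub_nonneg.mpr hμa) (sub_nonneg.mpr hμa),
        mul_nonneg (sub_nonneg.mpr hμa) hs0, mul_nonneg hL0.le hs0,
        mul_nonneg (sub_nonneg.mpr hμa) hL0.le]
    have h4 : L ≤ (a - k) ^ 2 / (2 * a) := by
      rw [le_div_iff₀ (by positivity)]; linarith
    linarith
  -- combine
  have hfinal : Real.exp (t * k) * (p * Real.exp (-t) + (1 - p)) ^ N ≤ δ := by
    calc Real.exp (t * k) * (p * Real.exp (-t) + (1 - p)) ^ N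
        ≤ Real.exp (t * k) * Real.exp (a * (Real.exp (-t) - 1)) := by
          exact mul_le_mul_of_nonneg_left step2 (Real.exp_nonneg _)
      _ = Real.exp (t * k + a * (Real.exp (-t) - 1)) := (Real.exp_add _ _).symm
      _ ≤ Real.exp (-L) := Real.exp_le_exp.mpr step3
      _ = δ := by
          rw [hL, one_div, Real.log_inv, neg_neg, Real.exp_log hδ0]
  linarith [step1]
end

section
/- Consider a coupon-collector process with k coupons, where each sample is an independent uniformly random coupon. After N = k·(Z−1 + ln(k/δ) + √((Z−1 + ln(k/δ))² − (Z−1)²/4)) samples, with probability at least 1−δ every coupon has been collected at least Z times. -/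
open Finset

lemma two_log_le {w : ℝ} (hw : 1 ≤ w) : 2 * Real.log w ≤ w - w⁻¹ := by
  have hmono : MonotoneOn (fun y : ℝ => y - y⁻¹ - 2 * Real.log y) (Set.Ici 1) := by
    apply monotoneOn_of_deriv_nonneg (convex_Ici 1)
    · apply ContinuousOn.sub
      · apply ContinuousOn.sub continuousOn_id
        exact fun x hx => (continuousAt_inv₀ (by have : (1:ℝ) ≤ x := hx; positivity)).continuousWithinAt
      · exact ContinuousOn.mul continuousOn_const
          (fun x hx => (Real.continuousAt_log (by have : (1:ℝ) ≤ x := hx; positivity)).continuousWithinAt)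
    · intro x hx
      rw [interior_Ici] at hx
      have hx0 : (0:ℝ) < x := lt_trans one_pos hx
      exact ((differentiable_id.differentiableAt.sub (differentiableAt_inv hx0.ne')).sub
        ((Real.differentiableAt_log hx0.ne').const_mul 2)).differentiableWithinAt
    · intro x hx
      rw [interior_Ici] at hx
      have hx0 : (0:ℝ) < x := lt_trans one_pos hx
      have hd : HasDerivAt (fun y : ℝ => y - y⁻¹ - 2 * Real.log y)
          (1 - (-(x^2)⁻¹) - 2 * x⁻¹) x :=
        ((hasDerivAt_id x).sub (hasDerivAt_inv hx0.ne')).sub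
          ((Real.hasDerivAt_log hx0.ne').const_mul 2)
      rw [hd.deriv]
      have h2 : (x^2)⁻¹ = x⁻¹ * x⁻¹ := by rw [sq, mul_inv]
      nlinarith [sq_nonneg (1 - x⁻¹)]
  have h := hmono (Set.self_mem_Ici) (show w ∈ Set.Ici (1:ℝ) from hw) hw
  simp only [Real.log_one, inv_one] at h
  linarith

set_option maxHeartbeats 1000000 in
/-- Coupon-collector with multiplicities (Double Dixie Cup): after
`N = ⌈k·(Z−1 + ln(k/δ) + √((Z−1 + ln(k/δ))² − (Z−1)²/4))⌉` i.i.d. uniform samples,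
with probability at least `1 − δ` every coupon is collected at least `Z` times. -/
theorem stmt_4 (k Z : ℕ) (hk : 0 < k) (hZ : 0 < Z) (δ : ℝ) (hδ : δ ∈ Set.Ioo (0 : ℝ) 1)
    (N : ℕ)
    (hN : N = ⌈(k : ℝ) * (((Z : ℝ) - 1) + Real.log (k / δ) +
        Real.sqrt ((((Z : ℝ) - 1) + Real.log (k / δ)) ^ 2 - ((Z : ℝ) - 1) ^ 2 / 4))⌉₊) :
    1 - δ ≤
      ((Finset.univ.filter (fun f : Fin N → Fin k =>
          ∀ c : Fin k, Z ≤ (Finset.univ.filter (fun t : Fin N => f t = c)).card)).card : ℝ)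
        / (k : ℝ) ^ N := by
  classical
  obtain ⟨hδ0, hδ1⟩ := hδ
  have hk0 : (0:ℝ) < k := by exact_mod_cast hk
  have hk1 : (1:ℝ) ≤ k := by exact_mod_cast hk
  set a : ℝ := (Z : ℝ) - 1 with ha
  have ha0 : 0 ≤ a := by
    have : (1:ℝ) ≤ Z := by exact_mod_cast hZ
    simp only [ha]; linarith
  set L : ℝ := Real.log ((k:ℝ)/δ) with hL
  have hL0 : 0 < L := Real.log_pos (by rw [lt_div_iff₀ hδ0]; nlinarith)
  set s : ℝ := Real.sqrt ((a + L)^2 - a^2/4) with hs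
  have hs0 : 0 ≤ s := Real.sqrt_nonneg _
  have hs2 : s^2 = (a+L)^2 - a^2/4 := Real.sq_sqrt (by nlinarith)
  set m : ℝ := a + L + s with hm
  clear_value m
  clear_value s
  clear_value L
  clear_value a
  have hNm : (k:ℝ) * m ≤ N := by
    rw [hN]; exact Nat.le_ceil _
  have hmN : m ≤ (N:ℝ)/k := by rw [le_div_iff₀ hk0]; nlinarith
  have hma : a ≤ m := by rw [hm]; linarith
  -- choose the exponent t
  obtain ⟨t, ht0, htkey⟩ : ∃ t : ℝ, 0 ≤ t ∧ t * a + m * (Real.exp (-t) - 1) ≤ -L := by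
    rcases eq_or_lt_of_le (show 1 ≤ Z from hZ) with h1 | h2
    · -- Z = 1
      refine ⟨Real.log 2, Real.log_nonneg one_le_two, ?_⟩
      have haz : a = 0 := by rw [ha, ← h1]; norm_num
      have hE : Real.exp (-(Real.log 2)) = 1/2 := by
        rw [Real.exp_neg, Real.exp_log (by norm_num : (0:ℝ) < 2)]; norm_num
      have hsL : s = L := by
        rw [hs, haz]; rw [show (0 + L)^2 - (0:ℝ)^2/4 = L^2 by ring, Real.sqrt_sq hL0.le]
      rw [haz, hE, hm, haz, hsL]; ring_nf; linarith
    · -- Z ≥ 2, a ≥ 1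
      have ha1 : 1 ≤ a := by
        have : (2:ℝ) ≤ Z := by exact_mod_cast h2
        rw [ha]; linarith
      have hapos : 0 < a := by linarith
      have ham : a < m := by rw [hm]; linarith
      have hmpos : 0 < m := lt_of_le_of_lt hapos.le ham
      have hw1 : 1 ≤ m / a := by rw [le_div_iff₀ hapos]; linarith
      refine ⟨Real.log (m/a), Real.log_nonneg hw1, ?_⟩
      have hE : Real.exp (-(Real.log (m/a))) = a/m := by
        rw [Real.exp_neg, Real.exp_log (by positivity), inv_div]
      rw [hE]
      have hkey := two_log_le hw1
      rw [inv_div] at hkey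
      -- clear denominators in hkey
      have hkey2 : 2 * (a*m) * Real.log (m/a) ≤ m^2 - a^2 := by
        have h := mul_le_mul_of_nonneg_left hkey (show (0:ℝ) ≤ a*m by positivity)
        have heq : a*m * (m/a - a/m) = m^2 - a^2 := by
          field_simp
        rw [heq] at h
        linarith
      have hma2 : m * (a/m - 1) = a - m := by field_simp
      rw [hma2]
      have hq : m^2 - 2*a*m + a^2 - 2*L*m ≥ 0 := by
        have hexp2 : m^2 - 2*a*m + a^2 - 2*L*m = s^2 - L^2 - 2*a*L := by rw [hm]; ring
        rw [hexp2, hs2]; nlinarith [sq_nonneg a]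
      nlinarith [hkey2, hq, hmpos, mul_le_mul_of_nonneg_left hkey2 (le_of_lt hmpos)]
  have hEt1 : Real.exp (-t) ≤ 1 := Real.exp_le_one_iff.2 (by linarith)
  have hEtpos : 0 < Real.exp (-t) := Real.exp_pos _
  -- per-coupon bound
  have hcard : ∀ c : Fin k,
      ((univ.filter (fun f : Fin N → Fin k =>
          (univ.filter (fun t' => f t' = c)).card < Z)).card : ℝ)
        ≤ Real.exp (t * a) * (Real.exp (-t) + ((k:ℝ) - 1)) ^ N := by
    intro c
    have step1 : ((univ.filter (fun f : Fin N → Fin k =>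
          (univ.filter (fun t' => f t' = c)).card < Z)).card : ℝ)
        ≤ ∑ f : Fin N → Fin k,
            Real.exp (t * (a - ((univ.filter (fun t' => f t' = c)).card : ℝ))) := by
      rw [Finset.card_eq_sum_ones]
      push_cast
      calc (∑ f ∈ univ.filter (fun f : Fin N → Fin k =>
              (univ.filter (fun t' => f t' = c)).card < Z), (1:ℝ))
          ≤ ∑ f ∈ univ.filter (fun f : Fin N → Fin k =>
              (univ.filter (fun t' => f t' = c)).card < Z),
              Real.exp (t * (a - ((univ.filter (fun t' => f t' = c)).card : ℝ))) := by
            apply Finset.sum_le_sum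
            intro f hf
            rw [Finset.mem_filter] at hf
            have hcnt : ((univ.filter (fun t' => f t' = c)).card : ℝ) ≤ a := by
              have := hf.2
              have h' : (univ.filter (fun t' => f t' = c)).card + 1 ≤ Z := this
              have : (((univ.filter (fun t' => f t' = c)).card : ℝ) + 1) ≤ (Z:ℝ) := by
                exact_mod_cast h'
              rw [ha]; linarith
            have : 0 ≤ t * (a - ((univ.filter (fun t' => f t' = c)).card : ℝ)) := by
              apply mul_nonneg ht0; linarith
            linarith [Real.one_le_exp this]
        _ ≤ ∑ f : Fin N → Fin k,
              Real.exp (t * (a - ((univ.filter (fun t' => f t' = c)).card : ℝ))) := by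
            apply Finset.sum_le_sum_of_subset_of_nonneg (Finset.filter_subset _ _)
            intros; positivity
    have step2 : (∑ f : Fin N → Fin k,
          Real.exp (t * (a - ((univ.filter (fun t' => f t' = c)).card : ℝ))))
        = Real.exp (t * a) * (Real.exp (-t) + ((k:ℝ) - 1)) ^ N := by
      have hsplit : ∀ f : Fin N → Fin k,
          Real.exp (t * (a - ((univ.filter (fun t' => f t' = c)).card : ℝ)))
            = Real.exp (t * a) * ∏ i : Fin N, (if f i = c then Real.exp (-t) else 1) := by
        intro f
        have hcnt : ((univ.filter (fun t' => f t' = c)).card : ℝ)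
            = ∑ i : Fin N, (if f i = c then (1:ℝ) else 0) := by
          rw [Finset.card_filter]; push_cast; rfl
        have hprod : (∏ i : Fin N, (if f i = c then Real.exp (-t) else 1))
            = Real.exp (∑ i : Fin N, (if f i = c then -t else 0)) := by
          rw [Real.exp_sum]
          apply Finset.prod_congr rfl
          intro i _
          split <;> simp
        have hsum : (∑ i : Fin N, (if f i = c then -t else 0))
            = -t * ∑ i : Fin N, (if f i = c then (1:ℝ) else 0) := by
          rw [Finset.mul_sum]
          apply Finset.sum_congr rfl
          intro i _
          split <;> ring
        rw [hprod, hsum, ← hcnt, ← Real.exp_add]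
        ring_nf
      rw [Finset.sum_congr rfl (fun f _ => hsplit f), ← Finset.mul_sum]
      congr 1
      rw [← Fintype.piFinset_univ, ← Finset.prod_univ_sum (fun _ : Fin N => (univ : Finset (Fin k)))
        (fun _ x => if x = c then Real.exp (-t) else 1)]
      have h1 : ∀ x : Fin k, (if x = c then Real.exp (-t) else (1:ℝ))
          = (if x = c then Real.exp (-t) - 1 else 0) + 1 := by
        intro x; split <;> ring
      have h2 : (∑ x : Fin k, (if x = c then Real.exp (-t) else (1:ℝ)))
          = Real.exp (-t) + ((k:ℝ) - 1) := by
        rw [Finset.sum_congr rfl (fun x _ => h1 x), Finset.sum_add_distrib,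
          Finset.sum_ite_eq' univ c, Finset.sum_const, Finset.card_univ, Fintype.card_fin]
        simp; ring
      rw [Finset.prod_congr rfl (fun i _ => h2), Finset.prod_const, Finset.card_univ,
        Fintype.card_fin]
    linarith [step1, le_of_eq step2]
  -- union bound
  have hbad : ((univ.filter (fun f : Fin N → Fin k =>
        ¬ ∀ c : Fin k, Z ≤ (univ.filter (fun t' => f t' = c)).card)).card : ℝ)
      ≤ (k:ℝ) * (Real.exp (t * a) * (Real.exp (-t) + ((k:ℝ) - 1)) ^ N) := by
    have hsub : (univ.filter (fun f : Fin N → Fin k =>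
          ¬ ∀ c : Fin k, Z ≤ (univ.filter (fun t' => f t' = c)).card))
        ⊆ univ.biUnion (fun c : Fin k => univ.filter (fun f : Fin N → Fin k =>
            (univ.filter (fun t' => f t' = c)).card < Z)) := by
      intro f hf
      rw [Finset.mem_filter] at hf
      push_neg at hf
      obtain ⟨c, hc⟩ := hf.2
      rw [Finset.mem_biUnion]
      exact ⟨c, Finset.mem_univ c, Finset.mem_filter.2 ⟨Finset.mem_univ f, hc⟩⟩
    have h1 : ((univ.filter (fun f : Fin N → Fin k =>
          ¬ ∀ c : Fin k, Z ≤ (univ.filter (fun t' => f t' = c)).card)).card : ℝ)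
        ≤ ∑ c : Fin k, ((univ.filter (fun f : Fin N → Fin k =>
            (univ.filter (fun t' => f t' = c)).card < Z)).card : ℝ) := by
      have := le_trans (Finset.card_le_card hsub) (Finset.card_biUnion_le)
      exact_mod_cast this
    calc _ ≤ ∑ c : Fin k, ((univ.filter (fun f : Fin N → Fin k =>
            (univ.filter (fun t' => f t' = c)).card < Z)).card : ℝ) := h1
      _ ≤ ∑ _c : Fin k, Real.exp (t * a) * (Real.exp (-t) + ((k:ℝ) - 1)) ^ N :=
          Finset.sum_le_sum (fun c _ => hcard c)
      _ = (k:ℝ) * (Real.exp (t * a) * (Real.exp (-t) + ((k:ℝ) - 1)) ^ N) := by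
          rw [Finset.sum_const, Finset.card_univ, Fintype.card_fin, nsmul_eq_mul]
  -- bound the RHS by δ * k^N
  have hbase0 : (0:ℝ) ≤ Real.exp (-t) + ((k:ℝ) - 1) := by linarith
  have hExp : Real.exp (-t) + ((k:ℝ) - 1) ≤ k * Real.exp ((Real.exp (-t) - 1)/k) := by
    have h := Real.add_one_le_exp ((Real.exp (-t) - 1)/k)
    have heq : Real.exp (-t) + ((k:ℝ) - 1) = k * ((Real.exp (-t) - 1)/k + 1) := by
      field_simp; ring
    rw [heq]
    exact mul_le_mul_of_nonneg_left h hk0.le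
  have hpow : (Real.exp (-t) + ((k:ℝ) - 1)) ^ N
      ≤ (k:ℝ)^N * Real.exp ((N:ℝ) * ((Real.exp (-t) - 1)/k)) := by
    calc (Real.exp (-t) + ((k:ℝ) - 1)) ^ N
        ≤ ((k:ℝ) * Real.exp ((Real.exp (-t) - 1)/k)) ^ N := pow_le_pow_left₀ hbase0 hExp N
      _ = (k:ℝ)^N * Real.exp ((Real.exp (-t) - 1)/k) ^ N := mul_pow _ _ N
      _ = (k:ℝ)^N * Real.exp ((N:ℝ) * ((Real.exp (-t) - 1)/k)) := by
          rw [← Real.exp_nat_mul]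
  have hXkey : t * a + (N:ℝ) * ((Real.exp (-t) - 1)/k) ≤ -L := by
    have h1 : (N:ℝ) * ((Real.exp (-t) - 1)/k) = ((N:ℝ)/k) * (Real.exp (-t) - 1) := by ring
    have h2 : ((N:ℝ)/k) * (Real.exp (-t) - 1) ≤ m * (Real.exp (-t) - 1) := by
      apply mul_le_mul_of_nonpos_right hmN (by linarith)
    rw [h1]; linarith
  have hlogdk : Real.log (δ / k) = -L := by
    rw [hL, show δ / (k:ℝ) = ((k:ℝ)/δ)⁻¹ by rw [inv_div], Real.log_inv]
  have hfinal : (k:ℝ) * (Real.exp (t * a) * (Real.exp (-t) + ((k:ℝ) - 1)) ^ N)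
      ≤ δ * (k:ℝ)^N := by
    have hstep : (k:ℝ) * (Real.exp (t * a) * (Real.exp (-t) + ((k:ℝ) - 1)) ^ N)
        ≤ (k:ℝ) * (Real.exp (t * a) * ((k:ℝ)^N
            * Real.exp ((N:ℝ) * ((Real.exp (-t) - 1)/k)))) := by
      apply mul_le_mul_of_nonneg_left _ hk0.le
      exact mul_le_mul_of_nonneg_left hpow (Real.exp_pos _).le
    have heq : (k:ℝ) * (Real.exp (t * a) * ((k:ℝ)^N
          * Real.exp ((N:ℝ) * ((Real.exp (-t) - 1)/k))))
        = (k:ℝ)^N * ((k:ℝ) * Real.exp (t * a + (N:ℝ) * ((Real.exp (-t) - 1)/k))) := by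
      rw [Real.exp_add]; ring
    have hle : (k:ℝ) * Real.exp (t * a + (N:ℝ) * ((Real.exp (-t) - 1)/k)) ≤ δ := by
      have hexp : Real.exp (t * a + (N:ℝ) * ((Real.exp (-t) - 1)/k)) ≤ δ / k := by
        rw [← Real.exp_log (show (0:ℝ) < δ/k by positivity)]
        exact Real.exp_le_exp.2 (by rw [hlogdk]; exact hXkey)
      rw [mul_comm]
      exact (le_div_iff₀ hk0).1 hexp
    calc _ ≤ _ := hstep
      _ = _ := heq
      _ ≤ (k:ℝ)^N * δ := mul_le_mul_of_nonneg_left hle (by positivity)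
      _ = δ * (k:ℝ)^N := by ring
  -- conclude
  have hkN : (0:ℝ) < (k:ℝ)^N := by positivity
  rw [le_div_iff₀ hkN]
  have hsplit := Finset.card_filter_add_card_filter_not
    (s := (univ : Finset (Fin N → Fin k)))
    (p := fun f : Fin N → Fin k => ∀ c : Fin k, Z ≤ (univ.filter (fun t' => f t' = c)).card)
  rw [Finset.card_univ, Fintype.card_fun, Fintype.card_fin, Fintype.card_fin] at hsplit
  have hsplitR : ((univ.filter (fun f : Fin N → Fin k =>
        ∀ c : Fin k, Z ≤ (univ.filter (fun t' => f t' = c)).card)).card : ℝ)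
      + ((univ.filter (fun f : Fin N → Fin k =>
        ¬ ∀ c : Fin k, Z ≤ (univ.filter (fun t' => f t' = c)).card)).card : ℝ)
      = (k:ℝ)^N := by exact_mod_cast hsplit
  nlinarith [hbad, hfinal, hsplitR]
end

section
/- Let A_1, …, A_N be independent geometric random variables with A_i ~ Geo(p_i) (support {1,2,…}, Pr[A_i = t] = p_i(1−p_i)^{t−1}) where p_1 ≥ … ≥ p_N. Then for A = Σ A_i and any λ ≥ 1, Pr[A > λ·E[A]] ≤ exp(−p_N·E[A]·(λ − 1 − ln λ)). -/
open MeasureTheory ProbabilityTheory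

/-- Key analytic inequality for Janson's bound. -/
lemma janson_key_ineq {p q lam : ℝ} (hq : 0 < q) (hqp : q ≤ p) (hp1 : p ≤ 1)
    (hlam : 1 ≤ lam) :
    p * Real.exp (q * (1 - 1 / lam)) / (1 - (1 - p) * Real.exp (q * (1 - 1 / lam)))
      ≤ Real.exp (q / p * Real.log lam) := by
  have hlam0 : (0:ℝ) < lam := lt_of_lt_of_le one_pos hlam
  set s : ℝ := q * (1 - 1 / lam) with hs_def
  have hinv0 : 0 < 1 / lam := by positivity
  have hinv1 : 1 / lam ≤ 1 := by
    rw [div_le_one hlam0]; exact hlam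
  have hs0 : 0 ≤ s := by
    apply mul_nonneg hq.le; linarith
  have hsq : s < q := by
    have : 1 - 1 / lam < 1 := by linarith
    calc s < q * 1 := by apply mul_lt_mul_of_pos_left this hq
    _ = q := mul_one q
  have hp0 : 0 < p := lt_of_lt_of_le hq hqp
  have hsp : s < p := lt_of_lt_of_le hsq hqp
  have hs1 : s < 1 := lt_of_lt_of_le hsp hp1
  have hexp : (1 - s) * Real.exp s ≤ 1 := by
    have h1 := Real.add_one_le_exp (-s)
    rw [Real.exp_neg] at h1
    have h2 := Real.exp_pos s
    have : (1 - s) ≤ (Real.exp s)⁻¹ := by linarith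
    calc (1 - s) * Real.exp s ≤ (Real.exp s)⁻¹ * Real.exp s :=
          mul_le_mul_of_nonneg_right this h2.le
      _ = 1 := inv_mul_cancel₀ h2.ne'
  have hes := Real.exp_pos s
  have hden : 0 < 1 - (1 - p) * Real.exp s := by nlinarith
  have h1sp : 0 < 1 - s / p := by
    have : s / p < 1 := (div_lt_one hp0).mpr hsp
    linarith
  have step1 : p * Real.exp s / (1 - (1 - p) * Real.exp s) ≤ (1 - s / p)⁻¹ := by
    rw [div_le_iff₀ hden, inv_mul_eq_div, le_div_iff₀ h1sp]
    have hps : p * (1 - s / p) = p - s := by field_simp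
    nlinarith
  have step2 : (1 - s / p)⁻¹ ≤ Real.exp (q / p * Real.log lam) := by
    have hq' : q ≠ 0 := hq.ne'
    have h1q : 1 - s / q = 1 / lam := by
      rw [hs_def]; field_simp; ring
    have hbern := rpow_one_add_le_one_add_mul_self
      (s := -(s/q)) (p := q / p)
      (by have : s / q < 1 := (div_lt_one hq).mpr hsq; linarith)
      (by positivity) ((div_le_one hp0).mpr hqp)
    have heq1 : (1:ℝ) + -(s/q) = 1 / lam := by rw [← h1q]; ring
    have heq2 : (1:ℝ) + q / p * -(s/q) = 1 - s / p := by field_simp; ring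
    rw [heq1, heq2] at hbern
    have hder : ((1:ℝ)/lam) ^ (q/p : ℝ) = Real.exp (-(q / p * Real.log lam)) := by
      rw [Real.rpow_def_of_pos hinv0]
      congr 1
      rw [one_div, Real.log_inv]; ring
    rw [hder] at hbern
    have hbposE := Real.exp_pos (-(q / p * Real.log lam))
    have := inv_anti₀ hbposE hbern
    rwa [← Real.exp_neg, neg_neg] at this
  exact le_trans step1 step2

/-- MGF of a geometric random variable (support `{1,2,…}`). -/
lemma geo_mgf {Ω : Type*} [MeasurableSpace Ω] (μ : Measure Ω) [IsProbabilityMeasure μ]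
    (X : Ω → ℕ) (hX : Measurable X) (p : ℝ) (hp0 : 0 < p) (hp1 : p ≤ 1)
    (hgeo : ∀ t : ℕ, 1 ≤ t → μ {ω | X ω = t} = ENNReal.ofReal (p * (1 - p) ^ (t - 1)))
    (s : ℝ) (hs0 : 0 ≤ s) (hr : (1 - p) * Real.exp s < 1) :
    ∫⁻ ω, ENNReal.ofReal (Real.exp (s * X ω)) ∂μ
      = ENNReal.ofReal (p * Real.exp s / (1 - (1 - p) * Real.exp s)) := by
  have h1p : (0:ℝ) ≤ 1 - p := by linarith
  have h1p1 : (1:ℝ) - p < 1 := by linarith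
  have hgeo' : ∀ n : ℕ, μ {ω | X ω = n + 1} = ENNReal.ofReal (p * (1 - p) ^ n) := by
    intro n; simpa using hgeo (n + 1) (by omega)
  have hmeasn : ∀ n : ℕ, MeasurableSet {ω | X ω = n} := by
    intro n
    have : {ω | X ω = n} = X ⁻¹' {n} := by ext ω; simp
    rw [this]; exact hX (measurableSet_singleton n)
  have hzero : μ {ω | X ω = 0} = 0 := by
    have hU : {ω | X ω ≠ 0} = ⋃ n : ℕ, {ω | X ω = n + 1} := by
      ext ω
      simp only [Set.mem_setOf_eq, Set.mem_iUnion]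
      constructor
      · intro h
        exact ⟨X ω - 1, by omega⟩
      · rintro ⟨n, hn⟩; omega
    have hdisj : Pairwise (Function.onFun Disjoint fun n : ℕ => {ω | X ω = n + 1}) := by
      intro m n hmn
      simp only [Function.onFun, Set.disjoint_left, Set.mem_setOf_eq]
      intro ω h1 h2; omega
    have hne0 : μ {ω | X ω ≠ 0} = 1 := by
      rw [hU, measure_iUnion hdisj (fun n => hmeasn (n + 1))]
      have hsum : ∀ n : ℕ, μ {ω | X ω = n + 1} = ENNReal.ofReal (p * (1 - p) ^ n) := hgeo'
      calc ∑' n : ℕ, μ {ω | X ω = n + 1}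
          = ∑' n : ℕ, ENNReal.ofReal (p * (1 - p) ^ n) := by
            exact tsum_congr fun n => hsum n
        _ = ENNReal.ofReal (∑' n : ℕ, p * (1 - p) ^ n) := by
            rw [ENNReal.ofReal_tsum_of_nonneg]
            · intro n; positivity
            · exact (summable_geometric_of_lt_one h1p h1p1).mul_left p
        _ = 1 := by
            rw [tsum_mul_left, tsum_geometric_of_lt_one h1p h1p1]
            have : (1:ℝ) - (1 - p) = p := by ring
            rw [this, mul_inv_cancel₀ hp0.ne', ENNReal.ofReal_one]
    have hcompl : {ω | X ω = 0} = {ω | X ω ≠ 0}ᶜ := by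
      ext ω; simp
    have hmne : MeasurableSet {ω | X ω ≠ 0} := by
      rw [hU]; exact MeasurableSet.iUnion fun n => hmeasn (n + 1)
    rw [hcompl, prob_compl_eq_one_sub hmne, hne0, tsub_self]
  have hfm : Measurable (fun n : ℕ => ENNReal.ofReal (Real.exp (s * n))) :=
    measurable_from_top
  set r : ℝ := (1 - p) * Real.exp s with hr_def
  have hr0 : 0 ≤ r := by positivity
  calc ∫⁻ ω, ENNReal.ofReal (Real.exp (s * X ω)) ∂μ
      = ∫⁻ n, ENNReal.ofReal (Real.exp (s * n)) ∂(μ.map X) := (lintegral_map hfm hX).symm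
    _ = ∑' n : ℕ, ENNReal.ofReal (Real.exp (s * n)) * (μ.map X) {n} :=
        lintegral_countable' _
    _ = ∑' n : ℕ, ENNReal.ofReal (Real.exp (s * n)) * μ {ω | X ω = n} := by
        refine tsum_congr fun n => ?_
        congr 1
        rw [Measure.map_apply hX (measurableSet_singleton n)]
        rfl
    _ = ENNReal.ofReal (Real.exp (s * (0:ℕ))) * μ {ω | X ω = 0}
        + ∑' n : ℕ, ENNReal.ofReal (Real.exp (s * (n + 1 : ℕ))) * μ {ω | X ω = n + 1} :=
        tsum_eq_zero_add' ENNReal.summable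
    _ = ∑' n : ℕ, ENNReal.ofReal (p * Real.exp s * r ^ n) := by
        rw [hzero, mul_zero, zero_add]
        refine tsum_congr fun n => ?_
        rw [hgeo' n, ← ENNReal.ofReal_mul (Real.exp_nonneg _)]
        congr 1
        have hc : ((n + 1 : ℕ) : ℝ) = (n : ℝ) + 1 := by push_cast; ring
        rw [hc, show s * ((n:ℝ) + 1) = (n:ℝ) * s + s by ring, Real.exp_add,
          Real.exp_nat_mul, hr_def, mul_pow]
        ring
    _ = ENNReal.ofReal (∑' n : ℕ, p * Real.exp s * r ^ n) := by
        rw [ENNReal.ofReal_tsum_of_nonneg]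
        · intro n; positivity
        · exact (summable_geometric_of_lt_one hr0 hr).mul_left _
    _ = ENNReal.ofReal (p * Real.exp s / (1 - r)) := by
        rw [tsum_mul_left, tsum_geometric_of_lt_one hr0 hr, div_eq_mul_inv]

/-- Lintegral of a finite product of independent `ℝ≥0∞`-valued random variables. -/
lemma lintegral_prod_iIndepFun {Ω ι : Type*} [MeasurableSpace Ω] (μ : Measure Ω)
    [IsProbabilityMeasure μ] (g : ι → Ω → ENNReal) (hg : ∀ i, Measurable (g i))
    (hind : iIndepFun g μ) (s : Finset ι) :
    ∫⁻ ω, ∏ i ∈ s, g i ω ∂μ = ∏ i ∈ s, ∫⁻ ω, g i ω ∂μ := by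
  classical
  induction s using Finset.induction_on with
  | empty => simp
  | @insert a s ha ih =>
    have hPeq : (∏ j ∈ s, g j) = fun ω => ∏ j ∈ s, g j ω := by
      funext ω; exact Finset.prod_apply ω s g
    have hIndep : IndepFun (∏ j ∈ s, g j) (g a) μ :=
      hind.indepFun_finsetProd_of_notMem hg ha
    have hIndep' : IndepFun (fun ω => ∏ j ∈ s, g j ω) (g a) μ := hPeq ▸ hIndep
    have hprodmeas : Measurable fun ω => ∏ j ∈ s, g j ω :=
      Finset.measurable_prod s fun i _ => hg i
    simp only [Finset.prod_insert ha]
    calc ∫⁻ ω, g a ω * ∏ i ∈ s, g i ω ∂μ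
        = ∫⁻ ω, (∏ i ∈ s, g i ω) * g a ω ∂μ :=
          lintegral_congr fun ω => mul_comm _ _
      _ = (∫⁻ ω, ∏ i ∈ s, g i ω ∂μ) * ∫⁻ ω, g a ω ∂μ :=
          lintegral_mul_eq_lintegral_mul_lintegral_of_indepFun'' hprodmeas.aemeasurable
            (hg a).aemeasurable hIndep'
      _ = (∏ i ∈ s, ∫⁻ ω, g i ω ∂μ) * ∫⁻ ω, g a ω ∂μ := by rw [ih]
      _ = (∫⁻ ω, g a ω ∂μ) * ∏ i ∈ s, ∫⁻ ω, g i ω ∂μ := mul_comm _ _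

/-- Janson's tail bound for sums of independent geometric random variables:
if `A i ~ Geo(p i)` (support `{1,2,…}`) are independent with `p 0 ≥ p 1 ≥ … ≥ p (N−1)`,
then for `A = Σ A i` and any `λ ≥ 1`,
`Pr[A > λ E[A]] ≤ exp(−p_N · E[A] · (λ − 1 − ln λ))` where `E[A] = Σ 1/p i`. -/
theorem stmt_7 {Ω : Type*} [MeasurableSpace Ω] (μ : Measure Ω) [IsProbabilityMeasure μ]
    (N : ℕ) (hN : 0 < N) (p : Fin N → ℝ)
    (hp : ∀ i, 0 < p i ∧ p i ≤ 1)
    (hmono : ∀ i j : Fin N, i ≤ j → p j ≤ p i)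
    (A : Fin N → Ω → ℕ) (hmeas : ∀ i, Measurable (A i))
    (hindep : iIndepFun A μ)
    (hgeo : ∀ i, ∀ t : ℕ, 1 ≤ t →
      μ {ω | A i ω = t} = ENNReal.ofReal (p i * (1 - p i) ^ (t - 1)))
    (E : ℝ) (hE : E = ∑ i, 1 / p i)
    (lam : ℝ) (hlam : 1 ≤ lam) :
    μ {ω | lam * E < ∑ i, (A i ω : ℝ)} ≤
      ENNReal.ofReal (Real.exp (-(p ⟨N - 1, by omega⟩ * E * (lam - 1 - Real.log lam)))) := by
  classical
  have hNlt : N - 1 < N := by omega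
  set q : ℝ := p ⟨N - 1, hNlt⟩ with hqdef
  have hq0 : 0 < q := (hp _).1
  have hq1 : q ≤ 1 := (hp _).2
  have hqle : ∀ i, q ≤ p i := by
    intro i
    refine hmono i ⟨N - 1, hNlt⟩ ?_
    rw [Fin.le_def]
    show i.1 ≤ N - 1
    have := i.isLt
    omega
  have hlam0 : (0:ℝ) < lam := lt_of_lt_of_le one_pos hlam
  set s : ℝ := q * (1 - 1 / lam) with hsdef
  have hinv0 : (0:ℝ) < 1 / lam := by positivity
  have hinv1 : 1 / lam ≤ 1 := (div_le_one hlam0).mpr hlam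
  have hs0 : 0 ≤ s := mul_nonneg hq0.le (by linarith)
  have hsq : s < q := by nlinarith
  have hexp1 : (1 - s) * Real.exp s ≤ 1 := by
    have h1 := Real.add_one_le_exp (-s)
    rw [Real.exp_neg] at h1
    have h2 := Real.exp_pos s
    have h3 : (1 - s) ≤ (Real.exp s)⁻¹ := by linarith
    calc (1 - s) * Real.exp s ≤ (Real.exp s)⁻¹ * Real.exp s :=
          mul_le_mul_of_nonneg_right h3 h2.le
      _ = 1 := inv_mul_cancel₀ h2.ne'
  have hri : ∀ i, (1 - p i) * Real.exp s < 1 := by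
    intro i
    have h1 : s < p i := lt_of_lt_of_le hsq (hqle i)
    have h2 := Real.exp_pos s
    have h4 : (1 - p i) * Real.exp s < (1 - s) * Real.exp s :=
      mul_lt_mul_of_pos_right (by linarith) h2
    linarith
  set g : Fin N → Ω → ENNReal := fun i ω => ENNReal.ofReal (Real.exp (s * A i ω)) with hgdef
  have hgm : ∀ i, Measurable (g i) := by
    intro i
    have heq : g i = (fun n : ℕ => ENNReal.ofReal (Real.exp (s * n))) ∘ A i := rfl
    rw [heq]
    exact Measurable.comp measurable_from_top (hmeas i)
  have hgind : iIndepFun g μ :=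
    hindep.comp (fun i (n : ℕ) => ENNReal.ofReal (Real.exp (s * n)))
      (fun i => measurable_from_top)
  have hprod : ∫⁻ ω, ∏ i, g i ω ∂μ = ∏ i, ∫⁻ ω, g i ω ∂μ :=
    lintegral_prod_iIndepFun μ g hgm hgind Finset.univ
  have hmgf : ∀ i, ∫⁻ ω, g i ω ∂μ
      = ENNReal.ofReal (p i * Real.exp s / (1 - (1 - p i) * Real.exp s)) :=
    fun i => geo_mgf μ (A i) (hmeas i) (p i) (hp i).1 (hp i).2 (hgeo i) s hs0 (hri i)
  have hkey : ∀ i, p i * Real.exp s / (1 - (1 - p i) * Real.exp s)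
      ≤ Real.exp (q / p i * Real.log lam) := fun i =>
    janson_key_ineq hq0 (hqle i) (hp i).2 hlam
  have hsum_exp : ∑ i, q / p i * Real.log lam = q * E * Real.log lam := by
    calc ∑ i, q / p i * Real.log lam
        = ∑ i, (1 / p i) * (q * Real.log lam) := by
          refine Finset.sum_congr rfl fun i _ => ?_; ring
      _ = (∑ i, 1 / p i) * (q * Real.log lam) := by rw [← Finset.sum_mul]
      _ = q * E * Real.log lam := by rw [hE]; ring
  set c : ENNReal := ENNReal.ofReal (Real.exp (s * (lam * E))) with hcdef
  set f : Ω → ENNReal := fun ω => ENNReal.ofReal (Real.exp (s * ∑ i, (A i ω : ℝ)))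
    with hfdef
  have hfm : Measurable f := by
    have h1 : Measurable fun ω => ∑ i, (A i ω : ℝ) :=
      Finset.measurable_sum Finset.univ fun i _ =>
        (measurable_from_top.comp (hmeas i) : Measurable fun ω => ((A i ω : ℕ) : ℝ))
    exact (Real.measurable_exp.comp (h1.const_mul s)).ennreal_ofReal
  have hsubset : {ω | lam * E < ∑ i, (A i ω : ℝ)} ⊆ {ω | c ≤ f ω} := by
    intro ω hω
    simp only [Set.mem_setOf_eq] at hω ⊢
    exact ENNReal.ofReal_le_ofReal (Real.exp_le_exp.mpr
      (mul_le_mul_of_nonneg_left hω.le hs0))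
  have hc0 : c ≠ 0 := (ENNReal.ofReal_pos.mpr (Real.exp_pos _)).ne'
  have hcT : c ≠ ⊤ := ENNReal.ofReal_ne_top
  have hmarkov := meas_ge_le_lintegral_div (μ := μ) hfm.aemeasurable hc0 hcT
  have hfprod : ∀ ω, f ω = ∏ i, g i ω := by
    intro ω
    calc f ω = ENNReal.ofReal (∏ i, Real.exp (s * (A i ω : ℝ))) := by
          rw [hfdef]
          simp only []
          rw [Finset.mul_sum, Real.exp_sum]
      _ = ∏ i, ENNReal.ofReal (Real.exp (s * (A i ω : ℝ))) :=
          ENNReal.ofReal_prod_of_nonneg fun i _ => (Real.exp_pos _).le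
      _ = ∏ i, g i ω := rfl
  have hlint : ∫⁻ ω, f ω ∂μ ≤ ENNReal.ofReal (Real.exp (q * E * Real.log lam)) := by
    calc ∫⁻ ω, f ω ∂μ = ∫⁻ ω, ∏ i, g i ω ∂μ := lintegral_congr fun ω => hfprod ω
      _ = ∏ i, ∫⁻ ω, g i ω ∂μ := hprod
      _ ≤ ∏ i : Fin N, ENNReal.ofReal (Real.exp (q / p i * Real.log lam)) := by
          refine Finset.prod_le_prod' fun i _ => ?_
          rw [hmgf i]
          exact ENNReal.ofReal_le_ofReal (hkey i)
      _ = ENNReal.ofReal (∏ i, Real.exp (q / p i * Real.log lam)) :=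
          (ENNReal.ofReal_prod_of_nonneg fun i _ => (Real.exp_pos _).le).symm
      _ = ENNReal.ofReal (Real.exp (∑ i, q / p i * Real.log lam)) := by
          rw [Real.exp_sum]
      _ = ENNReal.ofReal (Real.exp (q * E * Real.log lam)) := by rw [hsum_exp]
  have hls : s * lam = q * (lam - 1) := by
    rw [hsdef]; field_simp
  calc μ {ω | lam * E < ∑ i, (A i ω : ℝ)} ≤ μ {ω | c ≤ f ω} := measure_mono hsubset
    _ ≤ (∫⁻ ω, f ω ∂μ) / c := hmarkov
    _ ≤ ENNReal.ofReal (Real.exp (q * E * Real.log lam)) / c :=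
        ENNReal.div_le_div_right hlint c
    _ = ENNReal.ofReal (Real.exp (q * E * Real.log lam) / Real.exp (s * (lam * E))) := by
        rw [hcdef, ENNReal.ofReal_div_of_pos (Real.exp_pos _)]
    _ = ENNReal.ofReal (Real.exp (q * E * Real.log lam - s * (lam * E))) := by
        rw [Real.exp_sub]
    _ = ENNReal.ofReal (Real.exp (-(q * E * (lam - 1 - Real.log lam)))) := by
        congr 1
        congr 1
        linear_combination (-E) * hls
end

section
/- Fix r coupons, target N < r distinct coupons, δ ∈ (0,1), and let E = r(H_r − H_{r−N}). With probability at least 1−δ, the number of uniform samples required to see at least N distinct coupons is at most E + r·ln(1/δ)/(r−N) + √(2r·E·ln(1/δ)/(r−N)). -/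
open MeasureTheory ProbabilityTheory Real
open scoped ENNReal

private lemma lintegral_comp_nat {Ω : Type*} [MeasurableSpace Ω] (μ : Measure Ω)
    {X : Ω → ℕ} (hX : Measurable X) (f : ℕ → ℝ≥0∞) :
    ∫⁻ ω, f (X ω) ∂μ = ∑' k : ℕ, f k * μ {ω | X ω = k} := by
  have hf : Measurable f := measurable_from_top
  rw [← lintegral_map hf hX, lintegral_countable' f]
  refine tsum_congr fun k => ?_
  rw [Measure.map_apply hX (measurableSet_singleton k)]
  rfl

private lemma geom_zero {Ω : Type*} [MeasurableSpace Ω] (μ : Measure Ω) [IsProbabilityMeasure μ]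
    {X : Ω → ℕ} (hX : Measurable X) {q : ℝ} (hq0 : 0 ≤ q) (hq1 : q < 1)
    (hpmf : ∀ t : ℕ, 1 ≤ t → μ {ω | X ω = t} = ENNReal.ofReal ((1 - q) * q ^ (t - 1))) :
    μ {ω | X ω = 0} = 0 := by
  have htot : ∑' k : ℕ, μ {ω | X ω = k} = 1 := by
    have := lintegral_comp_nat μ hX (fun _ => 1)
    simp only [lintegral_const, one_mul, measure_univ] at this
    exact this.symm
  have hshift : ∑' k : ℕ, μ {ω | X ω = k + 1} = 1 := by
    have heq : ∀ k : ℕ, μ {ω | X ω = k + 1} = ENNReal.ofReal ((1 - q) * q ^ k) := by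
      intro k
      simpa using hpmf (k + 1) (by omega)
    rw [tsum_congr heq]
    rw [← ENNReal.ofReal_tsum_of_nonneg (fun k => mul_nonneg (by linarith) (pow_nonneg hq0 k))
      ((summable_geometric_of_lt_one hq0 hq1).mul_left _)]
    rw [tsum_mul_left, tsum_geometric_of_lt_one hq0 hq1]
    rw [mul_inv_cancel₀ (by linarith)]
    simp
  rw [tsum_eq_zero_add' ENNReal.summable, hshift] at htot
  have h1 : μ {ω | X ω = 0} + 1 = 0 + 1 := by simpa using htot
  exact (ENNReal.add_left_inj (by simp : (1:ℝ≥0∞) ≠ ⊤)).mp h1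

private lemma geom_mgf {Ω : Type*} [MeasurableSpace Ω] (μ : Measure Ω) [IsProbabilityMeasure μ]
    {X : Ω → ℕ} (hX : Measurable X) {q : ℝ} (hq0 : 0 ≤ q) (hq1 : q < 1)
    (hpmf : ∀ t : ℕ, 1 ≤ t → μ {ω | X ω = t} = ENNReal.ofReal ((1 - q) * q ^ (t - 1)))
    {t : ℝ} (hqt : q * exp t < 1) :
    Integrable (fun ω => exp (t * (X ω : ℝ))) μ ∧
      mgf (fun ω => (X ω : ℝ)) μ t = (1 - q) * exp t / (1 - q * exp t) := by
  have hmeasf : Measurable (fun ω => exp (t * (X ω : ℝ))) :=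
    (measurable_const.mul (measurable_from_top.comp hX : Measurable fun ω => ((X ω : ℝ)))).exp
  have hterm : ∀ k : ℕ, exp (t * ((k : ℝ) + 1)) * ((1 - q) * q ^ k)
      = (1 - q) * exp t * (q * exp t) ^ k := by
    intro k
    rw [mul_add, mul_one, exp_add, mul_pow, ← exp_nat_mul, mul_comm t (k:ℝ)]
    ring
  have hsum : Summable (fun k : ℕ => (1 - q) * exp t * (q * exp t) ^ k) :=
    (summable_geometric_of_lt_one (by positivity) hqt).mul_left _
  have hlint : ∫⁻ ω, ENNReal.ofReal (exp (t * (X ω : ℝ))) ∂μ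
      = ENNReal.ofReal ((1 - q) * exp t / (1 - q * exp t)) := by
    have := lintegral_comp_nat μ hX (fun k => ENNReal.ofReal (exp (t * (k : ℝ))))
    rw [this, tsum_eq_zero_add' ENNReal.summable, geom_zero μ hX hq0 hq1 hpmf, mul_zero, zero_add]
    have heq : ∀ k : ℕ, ENNReal.ofReal (exp (t * ((k + 1 : ℕ) : ℝ))) * μ {ω | X ω = k + 1}
        = ENNReal.ofReal ((1 - q) * exp t * (q * exp t) ^ k) := by
      intro k
      rw [hpmf (k + 1) (by omega)]
      rw [← ENNReal.ofReal_mul (exp_nonneg _)]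
      congr 1
      simpa using hterm k
    rw [tsum_congr heq,
      ← ENNReal.ofReal_tsum_of_nonneg
        (fun k => mul_nonneg (mul_nonneg (by linarith) (exp_nonneg t))
          (pow_nonneg (by positivity) k)) hsum,
      tsum_mul_left, tsum_geometric_of_lt_one (by positivity) hqt]
    rw [div_eq_mul_inv]
  have hint : Integrable (fun ω => exp (t * (X ω : ℝ))) μ := by
    refine ⟨hmeasf.aestronglyMeasurable, ?_⟩
    rw [hasFiniteIntegral_iff_ofReal (Filter.Eventually.of_forall fun ω => exp_nonneg _)]
    rw [hlint]
    exact ENNReal.ofReal_lt_top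
  refine ⟨hint, ?_⟩
  rw [mgf, integral_eq_lintegral_of_nonneg_ae
    (Filter.Eventually.of_forall fun ω => exp_nonneg _) hmeasf.aestronglyMeasurable, hlint,
    ENNReal.toReal_ofReal]
  have h1 : 0 < 1 - q * exp t := by linarith
  exact div_nonneg (mul_nonneg (by linarith) (exp_nonneg t)) h1.le

private lemma exp_mul_one_sub_le {t : ℝ} : exp t * (1 - t) ≤ 1 := by
  have h := add_one_le_exp (-t)
  have h2 := exp_pos t
  have h3 : exp t * exp (-t) = 1 := by rw [← exp_add]; simp
  nlinarith [mul_le_mul_of_nonneg_left h (le_of_lt h2)]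

private lemma mgf_factor_bound {q P x t : ℝ} (hq0 : 0 ≤ q) (hP : 0 < P) (hPp : P < 1 - q)
    (hx : 0 < x) (ht : t = P * (x / (1 + x))) :
    0 ≤ t ∧ q * exp t < 1 ∧
      (1 - q) * exp t / (1 - q * exp t) ≤ exp ((P / (1 - q)) * log (1 + x)) := by
  have hp : 0 < 1 - q := by linarith
  have hx1 : 0 < 1 + x := by linarith
  have hfrac0 : 0 ≤ x / (1 + x) := by positivity
  have hfrac1 : x / (1 + x) < 1 := (div_lt_one hx1).mpr (by linarith)
  have ht0 : 0 ≤ t := by rw [ht]; positivity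
  have htP : t < P := by rw [ht]; nlinarith
  have htp : t < 1 - q := lt_trans htP hPp
  have hkey : exp t * (1 - t) ≤ 1 := exp_mul_one_sub_le
  have het : 0 < exp t := exp_pos t
  have hqt : q * exp t < 1 := by nlinarith
  refine ⟨ht0, hqt, ?_⟩
  have hd1 : 0 < 1 - q * exp t := by linarith
  have hstep1 : (1 - q) * exp t / (1 - q * exp t) ≤ (1 - q) / ((1 - q) - t) := by
    rw [div_le_div_iff₀ hd1 (by linarith)]
    nlinarith
  set α := P / (1 - q) with hα
  have hα0 : 0 < α := by positivity
  have hα1 : α < 1 := (div_lt_one hp).mpr hPp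
  set L := log (1 + x) with hL
  have hconv := convexOn_exp.2 (Set.mem_univ (0 : ℝ)) (Set.mem_univ (-L))
    (by linarith : (0:ℝ) ≤ 1 - α) hα0.le (by ring)
  simp only [smul_eq_mul, mul_zero, zero_add, exp_zero, mul_one] at hconv
  have hexpL : exp (-L) = (1 + x)⁻¹ := by rw [exp_neg, exp_log hx1]
  have htpα : t / (1 - q) = α * (x / (1 + x)) := by
    rw [ht, hα]; ring
  have hcomb : exp (α * -L) ≤ 1 - t / (1 - q) := by
    calc exp (α * -L) ≤ 1 - α + α * exp (-L) := hconv
    _ = 1 - α * (1 - (1 + x)⁻¹) := by rw [hexpL]; ring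
    _ = 1 - α * (x / (1 + x)) := by
        congr 2
        field_simp
        ring
    _ = 1 - t / (1 - q) := by rw [htpα]
  have hpos : 0 < 1 - t / (1 - q) := lt_of_lt_of_le (exp_pos _) hcomb
  have hstep2 : (1 - q) / ((1 - q) - t) ≤ exp (α * L) := by
    have h1 : (1 - q) / ((1 - q) - t) = (1 - t / (1 - q))⁻¹ := by
      rw [inv_eq_one_div]
      rw [div_eq_div_iff (by linarith) hpos.ne']
      field_simp
    rw [h1]
    have h2 : exp (α * -L) * exp (α * L) = 1 := by rw [← exp_add]; simp
    rw [inv_le_iff_one_le_mul₀ hpos]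
    calc (1:ℝ) = exp (α * -L) * exp (α * L) := h2.symm
    _ ≤ (1 - t / (1 - q)) * exp (α * L) :=
        mul_le_mul_of_nonneg_right hcomb (exp_nonneg _)
    _ = exp (α * L) * (1 - t / (1 - q)) := mul_comm _ _
  exact le_trans hstep1 (by rwa [hα, hL] at hstep2)

/-- `harmonicR m` is the m-th harmonic number `H_m = ∑_{j=1}^m 1/j`. -/
noncomputable def harmonicR (m : ℕ) : ℝ := ∑ j ∈ Finset.range m, (1 : ℝ) / (j + 1)

private lemma E_eq_sum {r N : ℕ} (hNr : N ≤ r) :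
    (r : ℝ) * (harmonicR r - harmonicR (r - N)) = ∑ i ∈ Finset.range N, (r : ℝ) / ((r : ℝ) - i) := by
  have h1 : harmonicR r - harmonicR (r - N)
      = ∑ j ∈ Finset.Ico (r - N) r, (1 : ℝ) / (j + 1) := by
    rw [harmonicR, harmonicR]
    exact (Finset.sum_Ico_eq_sub _ (by omega : r - N ≤ r)).symm
  have h2 : ∑ j ∈ Finset.Ico (r - N) r, (1 : ℝ) / (j + 1)
      = ∑ k ∈ Finset.range N, (1 : ℝ) / ((r - N + k : ℕ) + 1) := by
    rw [Finset.sum_Ico_eq_sum_range, show r - (r - N) = N from by omega]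
  have h3 : ∑ k ∈ Finset.range N, (1 : ℝ) / ((r - N + k : ℕ) + 1)
      = ∑ k ∈ Finset.range N, (1 : ℝ) / ((r : ℝ) - k) := by
    rw [← Finset.sum_range_reflect]
    refine Finset.sum_congr rfl fun k hk => ?_
    rw [Finset.mem_range] at hk
    have : (r - N + (N - 1 - k) : ℕ) + 1 = r - k := by omega
    rw [show ((r - N + (N - 1 - k) : ℕ) : ℝ) + 1 = (((r - N + (N - 1 - k) : ℕ) + 1 : ℕ) : ℝ) by
      push_cast; ring, this]
    congr 1
    push_cast [Nat.cast_sub (by omega : k ≤ r)]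
    ring
  rw [h1, h2, h3, Finset.mul_sum]
  refine Finset.sum_congr rfl fun k _ => ?_
  rw [mul_one_div]

private lemma log_le_sqrt_two_mul {u : ℝ} (hu : 0 < u) :
    log (1 + (u + Real.sqrt (2 * u))) ≤ Real.sqrt (2 * u) := by
  have hv : 0 ≤ Real.sqrt (2 * u) := Real.sqrt_nonneg _
  have hsq : Real.sqrt (2 * u) ^ 2 = 2 * u := Real.sq_sqrt (by linarith)
  have h := Real.quadratic_le_exp_of_nonneg hv
  have h2 : 1 + (u + Real.sqrt (2 * u)) ≤ exp (Real.sqrt (2 * u)) := by nlinarith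
  exact (Real.log_le_iff_le_exp (by nlinarith)).mpr h2

/-- Partial coupon collector tail bound: the time to see `N` distinct coupons out of `r`
is a sum of independent geometrics `A i ~ Geo(1 − i/r)` (`i = 0,…,N−1`); with probability
at least `1 − δ` it is at most `E + r ln(1/δ)/(r−N) + √(2 r E ln(1/δ)/(r−N))`,
where `E = r(H_r − H_{r−N})`. -/
theorem stmt_9 {Ω : Type*} [MeasurableSpace Ω] (μ : Measure Ω) [IsProbabilityMeasure μ]
    (r N : ℕ) (hN : 0 < N) (hNr : N < r) (δ : ℝ) (hδ : δ ∈ Set.Ioo (0 : ℝ) 1)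
    (A : Fin N → Ω → ℕ) (hmeas : ∀ i, Measurable (A i))
    (hindep : iIndepFun A μ)
    (hgeo : ∀ i : Fin N, ∀ t : ℕ, 1 ≤ t →
      μ {ω | A i ω = t} = ENNReal.ofReal ((1 - (i : ℝ) / r) * ((i : ℝ) / r) ^ (t - 1)))
    (E : ℝ) (hE : E = (r : ℝ) * (harmonicR r - harmonicR (r - N))) :
    ENNReal.ofReal (1 - δ) ≤
      μ {ω | ∑ i, (A i ω : ℝ) ≤
        E + (r : ℝ) * Real.log (1 / δ) / ((r : ℝ) - N) +
          Real.sqrt (2 * r * E * Real.log (1 / δ) / ((r : ℝ) - N))} := by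
  obtain ⟨hδ0, hδ1⟩ := hδ
  have hNR : (N : ℝ) < r := by exact_mod_cast hNr
  have hN0 : (0:ℝ) < N := by exact_mod_cast hN
  have hr0 : (0:ℝ) < r := lt_trans hN0 hNR
  have hrN : (0:ℝ) < (r:ℝ) - N := by linarith
  set B := E + (r : ℝ) * Real.log (1 / δ) / ((r : ℝ) - N) +
      Real.sqrt (2 * r * E * Real.log (1 / δ) / ((r : ℝ) - N)) with hB
  set T := Real.log (1/δ) with hT
  have hT0 : 0 < T := Real.log_pos (by rw [lt_div_iff₀ hδ0]; linarith)
  set c := (r:ℝ) * T / ((r:ℝ) - N) with hc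
  have hc0 : 0 < c := div_pos (mul_pos hr0 hT0) hrN
  have hEsum : E = ∑ i ∈ Finset.range N, (r:ℝ)/((r:ℝ) - i) := by rw [hE]; exact E_eq_sum hNr.le
  have hEN : (N:ℝ) ≤ E := by
    rw [hEsum]
    calc (N:ℝ) = ∑ _i ∈ Finset.range N, (1:ℝ) := by simp
    _ ≤ _ := by
        refine Finset.sum_le_sum fun i hi => ?_
        rw [Finset.mem_range] at hi
        have hi' : (i:ℝ) < N := by exact_mod_cast hi
        rw [le_div_iff₀ (by linarith)]
        linarith
  have hE0 : 0 < E := lt_of_lt_of_le hN0 hEN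
  set u := c / E with hu
  have hu0 : 0 < u := div_pos hc0 hE0
  set x := u + Real.sqrt (2*u) with hx
  have hx0 : 0 < x := by positivity
  have hsarg : 2 * (r:ℝ) * E * T / ((r:ℝ) - N) = 2 * E * c := by
    rw [hc]; field_simp
  have hEx : E * x = c + Real.sqrt (2 * E * c) := by
    rw [hx, mul_add, hu]
    congr 1
    · field_simp
    · have h1 : E * Real.sqrt (2*(c/E)) = Real.sqrt (E^2) * Real.sqrt (2*(c/E)) := by
        rw [Real.sqrt_sq hE0.le]
      rw [h1, ← Real.sqrt_mul (by positivity)]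
      congr 1
      field_simp
  have hBx : B = E * (1 + x) := by
    rw [hB, hsarg, mul_add, mul_one, hEx, add_assoc]
  set P := ((r:ℝ) - N)/(r:ℝ) with hPdef
  have hP0 : 0 < P := div_pos hrN hr0
  set t := P * (x/(1+x)) with htdef
  -- per-coupon facts
  have hq0 : ∀ i : Fin N, 0 ≤ (i:ℝ)/r := fun i => by positivity
  have hq1 : ∀ i : Fin N, (i:ℝ)/r < 1 := by
    intro i
    rw [div_lt_one hr0]
    have : ((i:ℕ):ℝ) < N := by exact_mod_cast i.isLt
    linarith
  have hPp : ∀ i : Fin N, P < 1 - (i:ℝ)/r := by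
    intro i
    have hiN : ((i:ℕ):ℝ) < N := by exact_mod_cast i.isLt
    rw [hPdef, div_lt_iff₀ hr0]
    have : (1 - (i:ℝ)/r) * r = r - i := by field_simp
    rw [this]
    linarith
  have hfac := fun i : Fin N => mgf_factor_bound (hq0 i) hP0 (hPp i) hx0 htdef
  have ht0 : 0 ≤ t := (hfac ⟨0, hN⟩).1
  -- mgf of each coordinate
  have hIi := fun i : Fin N => geom_mgf μ (hmeas i) (hq0 i) (hq1 i) (hgeo i) (hfac i).2.1
  set X : Fin N → Ω → ℝ := fun i ω => (A i ω : ℝ) with hXdef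
  have hXmeas : ∀ i, Measurable (X i) := fun i => measurable_from_top.comp (hmeas i)
  have hXindep : iIndepFun X μ :=
    hindep.comp (fun _ n => (n : ℝ)) (fun _ => measurable_from_top)
  have hSigma : Integrable (fun ω => exp (t * (∑ i, X i) ω)) μ :=
    hXindep.integrable_exp_mul_sum hXmeas (fun i _ => (hIi i).1)
  have hchern := measure_ge_le_exp_mul_mgf (X := ∑ i, X i) (μ := μ) (t := t) B ht0 hSigma
  rw [hXindep.mgf_sum hXmeas] at hchern
  -- bound the product of mgfs
  have hsum_inv : ∑ i : Fin N, P/(1 - (i:ℝ)/r) = P * E := by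
    rw [hEsum, Finset.mul_sum, ← Fin.sum_univ_eq_sum_range (fun i => P * ((r:ℝ)/((r:ℝ) - i))) N]
    refine Finset.sum_congr rfl fun i _ => ?_
    have h1 : (1:ℝ) - (i:ℝ)/r = ((r:ℝ) - i)/r := by field_simp
    have h2 : (0:ℝ) < (r:ℝ) - i := by
      have : ((i:ℕ):ℝ) < N := by exact_mod_cast i.isLt
      linarith
    rw [h1]
    rw [div_div_eq_mul_div, mul_div_assoc]
  have hprod : ∏ i : Fin N, mgf (X i) μ t ≤ exp (P * E * log (1+x)) := by
    calc ∏ i : Fin N, mgf (X i) μ t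
        ≤ ∏ i : Fin N, exp ((P/(1 - (i:ℝ)/r)) * log (1+x)) := by
          refine Finset.prod_le_prod (fun i _ => mgf_nonneg) (fun i _ => ?_)
          rw [(hIi i).2]
          exact (hfac i).2.2
    _ = exp (∑ i : Fin N, (P/(1 - (i:ℝ)/r)) * log (1+x)) := (Real.exp_sum _ _).symm
    _ = exp (P * E * log (1+x)) := by rw [← Finset.sum_mul, hsum_inv]
  -- final numeric bound
  have hPE : 0 < P * E := mul_pos hP0 hE0
  have hfinal : exp (-t * B) * exp (P * E * log (1+x)) ≤ δ := by
    rw [← exp_add]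
    have htB : t * B = P * E * x := by
      rw [htdef, hBx]
      have h1x : (0:ℝ) < 1 + x := by linarith
      field_simp
    have hlog : log (1+x) ≤ Real.sqrt (2*u) := by
      rw [hx]; exact log_le_sqrt_two_mul hu0
    have hxlog : u ≤ x - log (1+x) := by rw [hx] at hlog ⊢; linarith
    have hPEu : P * E * u = T := by
      rw [hu, hc, hPdef]
      field_simp
    have hexp : -t * B + P * E * log (1+x) ≤ -T := by
      have h1 : P * E * u ≤ P * E * (x - log (1+x)) :=
        mul_le_mul_of_nonneg_left hxlog hPE.le
      rw [hPEu] at h1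
      nlinarith [htB]
    calc exp (-t * B + P * E * log (1+x)) ≤ exp (-T) := exp_le_exp.mpr hexp
    _ = δ := by rw [hT, one_div, Real.log_inv, neg_neg, Real.exp_log hδ0]
  have hδbound : (μ {ω | B ≤ (∑ i, X i) ω}).toReal ≤ δ := by
    refine le_trans hchern (le_trans ?_ hfinal)
    exact mul_le_mul_of_nonneg_left hprod (exp_nonneg _)
  have hBset : μ {ω | B ≤ (∑ i, X i) ω} ≤ ENNReal.ofReal δ := by
    rw [← ENNReal.ofReal_toReal (measure_ne_top μ _)]
    exact ENNReal.ofReal_le_ofReal hδbound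
  have hsub : {ω | ∑ i, (A i ω : ℝ) ≤ B}ᶜ ⊆ {ω | B ≤ (∑ i, X i) ω} := by
    intro ω hω
    simp only [Set.mem_compl_iff, Set.mem_setOf_eq, not_le] at hω ⊢
    rw [Finset.sum_apply]
    exact hω.le
  calc ENNReal.ofReal (1 - δ) = 1 - ENNReal.ofReal δ := by rw [ENNReal.ofReal_sub _ hδ0.le, ENNReal.ofReal_one]
  _ ≤ 1 - μ {ω | ∑ i, (A i ω : ℝ) ≤ B}ᶜ :=
      tsub_le_tsub_left (le_trans (measure_mono hsub) hBset) 1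
  _ ≤ μ {ω | ∑ i, (A i ω : ℝ) ≤ B} := by
      rw [tsub_le_iff_right]
      calc (1:ℝ≥0∞) = μ Set.univ := (measure_univ).symm
      _ = μ ({ω | ∑ i, (A i ω : ℝ) ≤ B} ∪ {ω | ∑ i, (A i ω : ℝ) ≤ B}ᶜ) := by
          rw [Set.union_compl_self]
      _ ≤ _ := measure_union_le _ _
end

section
/- Let K be a positive integer and ψ ∈ (0,1/2] with ψK an integer. In the coupon-collector process over K coupons, with probability at least 1−δ, after K·ln(1/ψ) + ψ^{-1}·ln(1/δ) + √(2K·ψ^{-1}·ln(1/ψ)·ln(1/δ)) samples, all but at most ψK coupons have been collected. -/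
set_option maxHeartbeats 800000

open Finset


-- log t ≤ (t - t⁻¹)/2 for t ≥ 1
lemma aux_log_le_half (t : ℝ) (ht : 1 ≤ t) : Real.log t ≤ (t - t⁻¹) / 2 := by
  have h0 : 0 < t := lt_of_lt_of_le one_pos ht
  have hl : 0 ≤ Real.log t := Real.log_nonneg ht
  have hs : Real.log t ≤ Real.sinh (Real.log t) := by
    rcases eq_or_lt_of_le hl with h | h
    · rw [← h]; simp
    · exact le_of_lt ((Real.self_lt_sinh_iff).2 h)
  calc Real.log t ≤ Real.sinh (Real.log t) := hs
    _ = (t - t⁻¹) / 2 := by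
        rw [Real.sinh_eq, Real.exp_log h0, Real.exp_neg, Real.exp_log h0]

-- 1/(1-x) ≤ exp (x + x²/(2(1-x)))
lemma aux_inv_le_exp (x : ℝ) (h0 : 0 ≤ x) (h1 : x < 1) :
    (1 - x)⁻¹ ≤ Real.exp (x + x ^ 2 / (2 * (1 - x))) := by
  have hx : (0:ℝ) < 1 - x := by linarith
  have ht : 1 ≤ (1 - x)⁻¹ := by
    rw [le_inv_comm₀] <;> nlinarith
  have h := aux_log_le_half _ ht
  have heq : ((1 - x)⁻¹ - ((1-x)⁻¹)⁻¹) / 2 = x + x ^ 2 / (2 * (1 - x)) := by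
    rw [inv_inv]; field_simp; ring
  rw [heq] at h
  calc (1 - x)⁻¹ = Real.exp (Real.log (1 - x)⁻¹) := (Real.exp_log (by positivity)).symm
    _ ≤ _ := Real.exp_le_exp.2 h


lemma aux_harmonic (K M : ℕ) (hM : 0 < M) :
    ∀ r : ℕ, r + M ≤ K →
      ∑ i ∈ Finset.range r, ((K:ℝ) - i)⁻¹ ≤ Real.log K - Real.log ((K:ℝ) - r) := by
  intro r
  induction r with
  | zero => intro _; simp
  | succ r ih =>
    intro hrK
    have h1 : r + M ≤ K := by omega
    have hKr1 : (1:ℝ) ≤ (K:ℝ) - (r+1) := by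
      have : ((r:ℝ) + 1) + 1 ≤ K := by exact_mod_cast Nat.cast_le.2 (by omega : r + 1 + 1 ≤ K)
      linarith
    have hKr : (0:ℝ) < (K:ℝ) - r := by linarith
    have hA : (0:ℝ) < (K:ℝ) - (r+1) := by linarith
    have hstep : ((K:ℝ) - r)⁻¹ ≤ Real.log ((K:ℝ) - r) - Real.log ((K:ℝ) - (r+1)) := by
      have hpos : (0:ℝ) < ((K:ℝ) - (r+1)) / ((K:ℝ) - r) := by positivity
      have h2 := Real.log_le_sub_one_of_pos hpos
      rw [Real.log_div (ne_of_gt hA) (ne_of_gt hKr)] at h2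
      have h3 : ((K:ℝ)-(r+1))/((K:ℝ)-r) - 1 = -((K:ℝ)-r)⁻¹ := by
        field_simp
        ring
      rw [h3] at h2; linarith
    rw [Finset.sum_range_succ]
    push_cast
    have := ih h1
    linarith

lemma aux_harmonic_sq (K M : ℕ) (hM : 0 < M) :
    ∀ r : ℕ, r + M ≤ K →
      ∑ i ∈ Finset.range r, (((K:ℝ) - i)⁻¹) ^ 2 ≤ ((K:ℝ) - r)⁻¹ - ((K:ℝ))⁻¹ := by
  intro r
  induction r with
  | zero => intro _; simp
  | succ r ih =>
    intro hrK
    have h1 : r + M ≤ K := by omega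
    have hKr1 : (1:ℝ) ≤ (K:ℝ) - (r+1) := by
      have : ((r:ℝ) + 1) + 1 ≤ K := by exact_mod_cast Nat.cast_le.2 (by omega : r + 1 + 1 ≤ K)
      linarith
    have hKr : (0:ℝ) < (K:ℝ) - r := by linarith
    have hA : (0:ℝ) < (K:ℝ) - (r+1) := by linarith
    have hstep : (((K:ℝ) - r)⁻¹) ^ 2 ≤ ((K:ℝ) - (r+1))⁻¹ - ((K:ℝ) - r)⁻¹ := by
      have he : ((K:ℝ) - (r+1))⁻¹ - ((K:ℝ) - r)⁻¹ = (((K:ℝ)-(r+1)) * ((K:ℝ)-r))⁻¹ := by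
        rw [inv_sub_inv (ne_of_gt hA) (ne_of_gt hKr)]
        norm_num
      rw [he, sq, ← mul_inv]
      gcongr
      linarith
    rw [Finset.sum_range_succ]
    push_cast
    have := ih h1
    linarith


lemma count_le (K r : ℕ) (hK : 0 < K) (u : ℝ) (hu0 : 0 ≤ u) (hu1 : u < 1)
    (hur : ∀ i : ℕ, i < r → u * K < (K:ℝ) - i) :
    ∀ (n : ℕ) (S : Finset (Fin K)),
      ((Finset.univ.filter (fun f : Fin n → Fin K =>
          (S ∪ Finset.univ.image f).card < r)).card : ℝ)
        ≤ ((K:ℝ) * (1-u))^n * ∏ i ∈ Finset.Ico S.card r, (((K:ℝ)-i) / ((K:ℝ)-i-u*K)) := by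
  have hXpos : (0:ℝ) < (K:ℝ) * (1-u) := by
    have : (1:ℝ) ≤ (K:ℝ) := by exact_mod_cast hK
    nlinarith
  have hden : ∀ i : ℕ, i < r → (0:ℝ) < (K:ℝ) - i - u*K := by
    intro i hi; have := hur i hi; linarith
  have hfac : ∀ i : ℕ, i < r → (1:ℝ) ≤ ((K:ℝ)-i) / ((K:ℝ)-i-u*K) := by
    intro i hi
    rw [le_div_iff₀ (hden i hi)]
    have := Nat.cast_nonneg (α := ℝ) K
    nlinarith
  have hprod : ∀ d : ℕ, (1:ℝ) ≤ ∏ i ∈ Finset.Ico d r, (((K:ℝ)-i) / ((K:ℝ)-i-u*K)) := by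
    intro d
    calc (1:ℝ) = ∏ _i ∈ Finset.Ico d r, (1:ℝ) := by simp
      _ ≤ _ := Finset.prod_le_prod (fun _ _ => zero_le_one)
            (fun i hi => hfac i (Finset.mem_Ico.1 hi).2)
  intro n
  induction n with
  | zero =>
    intro S
    have hb : ((Finset.univ.filter (fun f : Fin 0 → Fin K =>
        (S ∪ Finset.univ.image f).card < r)).card : ℝ) ≤ 1 := by
      have := Finset.card_filter_le (Finset.univ : Finset (Fin 0 → Fin K))
        (fun f => (S ∪ Finset.univ.image f).card < r)
      have hcard : (Finset.univ : Finset (Fin 0 → Fin K)).card = 1 := by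
        simp [Finset.card_univ]
      rw [hcard] at this
      exact_mod_cast this
    calc _ ≤ (1:ℝ) := hb
      _ ≤ _ := by simpa using hprod S.card
  | succ n ih =>
    intro S
    by_cases hd : r ≤ S.card
    · -- filter is empty
      have hempty : (Finset.univ.filter (fun f : Fin (n+1) → Fin K =>
          (S ∪ Finset.univ.image f).card < r)) = ∅ := by
        apply Finset.filter_false_of_mem
        intro f _
        have : S.card ≤ (S ∪ Finset.univ.image f).card :=
          Finset.card_le_card Finset.subset_union_left
        omega
      rw [hempty]
      simp only [Finset.card_empty, Nat.cast_zero]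
      exact mul_nonneg (le_of_lt (pow_pos hXpos _))
        (le_trans zero_le_one (hprod _))
    · push_neg at hd
      -- counting identity
      have hcount : (Finset.univ.filter (fun f : Fin (n+1) → Fin K =>
            (S ∪ Finset.univ.image f).card < r)).card
          = ∑ x : Fin K, (Finset.univ.filter (fun g : Fin n → Fin K =>
            ((insert x S) ∪ Finset.univ.image g).card < r)).card := by
        rw [Finset.card_eq_sum_card_fiberwise
          (f := fun f : Fin (n+1) → Fin K => f 0) (t := Finset.univ) (fun _ _ => Finset.mem_univ _)]
        refine Finset.sum_congr rfl (fun x _ => ?_)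
        apply Finset.card_nbij' (fun f => Fin.tail f) (fun g => Fin.cons x g)
        · intro f hf
          simp only [Finset.coe_filter, Set.mem_setOf_eq, Finset.mem_filter, Finset.mem_univ, true_and] at hf ⊢
          obtain ⟨h1, h2⟩ := hf
          have himg : (Finset.univ.image f : Finset (Fin K))
              = insert x (Finset.univ.image (Fin.tail f)) := by
            ext y
            simp only [Finset.mem_image, Finset.mem_univ, true_and, Finset.mem_insert]
            constructor
            · rintro ⟨i, rfl⟩
              rcases Fin.eq_zero_or_eq_succ i with h | ⟨j, rfl⟩
              · subst h; left; exact h2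
              · right; exact ⟨j, rfl⟩
            · rintro (rfl | ⟨j, rfl⟩)
              · exact ⟨0, h2⟩
              · exact ⟨j.succ, rfl⟩
          rw [himg, Finset.union_insert, ← Finset.insert_union] at h1
          exact h1
        · intro g hg
          simp only [Finset.coe_filter, Set.mem_setOf_eq, Finset.mem_filter, Finset.mem_univ, true_and] at hg ⊢
          constructor
          · have himg : (Finset.univ.image (Fin.cons x g) : Finset (Fin K))
                = insert x (Finset.univ.image g) := by
              ext y
              simp only [Finset.mem_image, Finset.mem_univ, true_and, Finset.mem_insert]
              constructor
              · rintro ⟨i, rfl⟩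
                rcases Fin.eq_zero_or_eq_succ i with h | ⟨j, rfl⟩
                · subst h; left; simp
                · right; exact ⟨j, by simp⟩
              · rintro (rfl | ⟨j, rfl⟩)
                · exact ⟨0, by simp⟩
                · exact ⟨j.succ, by simp⟩
            rw [himg, Finset.union_insert, ← Finset.insert_union]
            exact hg
          · simp
        · intro f hf
          simp only [Finset.coe_filter, Set.mem_setOf_eq, Finset.mem_filter, Finset.mem_univ, true_and] at hf
          rw [← hf.2]
          exact Fin.cons_self_tail f
        · intro g _
          simp
      rw [hcount]
      push_cast
      set d := S.card with hdd
      set Q' := ∏ i ∈ Finset.Ico (d+1) r, (((K:ℝ)-i) / ((K:ℝ)-i-u*K)) with hQ'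
      have hQ'pos : 0 < Q' := lt_of_lt_of_le one_pos (hprod (d+1))
      have hmd : ∀ i ∈ Finset.Ico d r, True := fun _ _ => trivial
      have hsplit : ∏ i ∈ Finset.Ico d r, (((K:ℝ)-i) / ((K:ℝ)-i-u*K))
          = (((K:ℝ)-d) / ((K:ℝ)-d-u*K)) * Q' := by
        rw [← Finset.insert_Ico_add_one_left_eq_Ico hd, Finset.prod_insert (by simp)]
      -- bound each fiber
      have hfib : ∀ x : Fin K,
          ((Finset.univ.filter (fun g : Fin n → Fin K =>
            ((insert x S) ∪ Finset.univ.image g).card < r)).card : ℝ)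
          ≤ ((K:ℝ) * (1-u))^n * ∏ i ∈ Finset.Ico (insert x S).card r,
              (((K:ℝ)-i) / ((K:ℝ)-i-u*K)) := fun x => ih (insert x S)
      have h1 : ∀ x ∈ S, ((Finset.univ.filter (fun g : Fin n → Fin K =>
            ((insert x S) ∪ Finset.univ.image g).card < r)).card : ℝ)
          ≤ ((K:ℝ) * (1-u))^n * ((((K:ℝ)-d) / ((K:ℝ)-d-u*K)) * Q') := by
        intro x hx
        calc ((Finset.univ.filter (fun g : Fin n → Fin K =>
              ((insert x S) ∪ Finset.univ.image g).card < r)).card : ℝ)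
            ≤ ((K:ℝ) * (1-u))^n * ∏ i ∈ Finset.Ico (insert x S).card r,
                (((K:ℝ)-i) / ((K:ℝ)-i-u*K)) := hfib x
          _ = ((K:ℝ) * (1-u))^n * ((((K:ℝ)-d) / ((K:ℝ)-d-u*K)) * Q') := by
              rw [Finset.insert_eq_self.2 hx, ← hdd, hsplit]
      have h2 : ∀ x ∈ Sᶜ, ((Finset.univ.filter (fun g : Fin n → Fin K =>
            ((insert x S) ∪ Finset.univ.image g).card < r)).card : ℝ)
          ≤ ((K:ℝ) * (1-u))^n * Q' := by
        intro x hx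
        have hxs : x ∉ S := Finset.mem_compl.1 hx
        have := hfib x
        rwa [Finset.card_insert_of_notMem hxs] at this
      have hsum : (∑ x : Fin K, ((Finset.univ.filter (fun g : Fin n → Fin K =>
            ((insert x S) ∪ Finset.univ.image g).card < r)).card : ℝ))
          ≤ (d:ℝ) * (((K:ℝ) * (1-u))^n * ((((K:ℝ)-d) / ((K:ℝ)-d-u*K)) * Q'))
            + ((K:ℝ) - d) * (((K:ℝ) * (1-u))^n * Q') := by
        rw [← Finset.sum_add_sum_compl S]
        gcongr ?_ + ?_
        · calc ∑ x ∈ S, ((Finset.univ.filter (fun g : Fin n → Fin K =>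
                ((insert x S) ∪ Finset.univ.image g).card < r)).card : ℝ)
              ≤ S.card • (((K:ℝ) * (1-u))^n * ((((K:ℝ)-d) / ((K:ℝ)-d-u*K)) * Q')) :=
                Finset.sum_le_card_nsmul _ _ _ h1
            _ = (d:ℝ) * _ := by rw [nsmul_eq_mul]
        · calc ∑ x ∈ Sᶜ, ((Finset.univ.filter (fun g : Fin n → Fin K =>
                ((insert x S) ∪ Finset.univ.image g).card < r)).card : ℝ)
              ≤ Sᶜ.card • (((K:ℝ) * (1-u))^n * Q') :=
                Finset.sum_le_card_nsmul _ _ _ h2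
            _ = ((K:ℝ) - d) * (((K:ℝ) * (1-u))^n * Q') := by
                rw [nsmul_eq_mul, Finset.card_compl, Fintype.card_fin]
                congr 1
                have hdK : d ≤ K := by
                  have := Finset.card_le_card (Finset.subset_univ S)
                  simpa [Finset.card_univ] using this
                rw [Nat.cast_sub (hdd ▸ hdK : S.card ≤ K), ← hdd]
      refine hsum.trans (le_of_eq ?_)
      rw [hsplit, pow_succ]
      have hD : (0:ℝ) < (K:ℝ) - d - u*K := hden d hd
      have hDne : ((K:ℝ) - d - u*K) ≠ 0 := ne_of_gt hD
      have hkey : (d:ℝ) * (((K:ℝ)-d) / ((K:ℝ)-d-u*K)) + ((K:ℝ) - d)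
          = ((K:ℝ)*(1-u)) * (((K:ℝ)-d) / ((K:ℝ)-d-u*K)) := by
        rw [div_eq_mul_inv]
        have hDD := mul_inv_cancel₀ hDne
        linear_combination (-((K:ℝ) - d)) * hDD
      linear_combination (((K:ℝ)*(1-u))^n * Q') * hkey


/-- Partial coupon collection: over `K` coupons with `ψ = M/K ∈ (0, 1/2]`, after
`K ln(1/ψ) + ψ⁻¹ ln(1/δ) + √(2K ψ⁻¹ ln(1/ψ) ln(1/δ))` uniform samples, with probability
at least `1 − δ` all but at most `ψK = M` coupons have been collected. -/
theorem stmt_11 (K M : ℕ) (hK : 0 < K) (hM : 0 < M) (δ : ℝ) (hδ : δ ∈ Set.Ioo (0 : ℝ) 1)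
    (ψ : ℝ) (hψ : ψ = (M : ℝ) / K) (hψhalf : ψ ≤ 1 / 2)
    (n : ℕ)
    (hn : n = ⌈(K : ℝ) * Real.log (1 / ψ) + ψ⁻¹ * Real.log (1 / δ) +
        Real.sqrt (2 * K * ψ⁻¹ * Real.log (1 / ψ) * Real.log (1 / δ))⌉₊) :
    1 - δ ≤
      ((Finset.univ.filter (fun f : Fin n → Fin K =>
          K - M ≤ (Finset.univ.image f).card)).card : ℝ) / (K : ℝ) ^ n := by
  classical
  obtain ⟨hδ0, hδ1⟩ := hδ
  have hK0 : (0:ℝ) < K := by exact_mod_cast hK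
  have hM0 : (0:ℝ) < M := by exact_mod_cast hM
  have h2M : 2 * (M:ℝ) ≤ K := by
    rw [hψ, div_le_div_iff₀ hK0 two_pos] at hψhalf
    linarith
  have h2Mn : 2 * M ≤ K := by exact_mod_cast h2M
  have hMK : (M:ℝ) < K := by linarith
  have hψ0 : 0 < ψ := by rw [hψ]; positivity
  have hψ1 : ψ < 1 := by rw [hψ, div_lt_one hK0]; exact hMK
  set a : ℝ := Real.log (1/ψ) with ha_def
  set b : ℝ := Real.log (1/δ) with hb_def
  clear_value a b
  have ha : 0 < a := by rw [ha_def]; exact Real.log_pos (by rw [one_lt_div hψ0]; exact hψ1)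
  have hb : 0 < b := by rw [hb_def]; exact Real.log_pos (by rw [one_lt_div hδ0]; exact hδ1)
  set c : ℝ := (K:ℝ)/M with hc_def
  clear_value c
  have hc0 : 0 < c := by rw [hc_def]; positivity
  have hc2 : 2 ≤ c := by rw [hc_def, le_div_iff₀ hM0]; linarith
  have hcM : c * (M:ℝ) = K := by rw [hc_def]; field_simp
  set V : ℝ := (K:ℝ)^2 * a / M with hV_def
  clear_value V
  have hV : 0 < V := by rw [hV_def]; exact div_pos (mul_pos (by positivity) ha) hM0
  set s : ℝ := Real.sqrt (2*b/V) with hs_def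
  clear_value s
  have hs : 0 < s := by rw [hs_def]; exact Real.sqrt_pos.2 (div_pos (by linarith) hV)
  have hs2 : s^2 = 2*b/V := by rw [hs_def]; exact Real.sq_sqrt (le_of_lt (div_pos (by linarith) hV))
  have hVs2 : V * s^2 = 2*b := by rw [hs2]; field_simp
  have hcs0 : (0:ℝ) < c*s := mul_pos hc0 hs
  have h1cs : (0:ℝ) < 1 + c*s := by linarith
  set u : ℝ := s/(1+c*s) with hu_def
  clear_value u
  have hu0 : 0 < u := by rw [hu_def]; exact div_pos hs h1cs
  have huc : u*c < 1 := by
    rw [hu_def, div_mul_eq_mul_div, div_lt_one h1cs]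
    have h := mul_comm s c
    linarith
  have hucinv : u < 1/c := by rw [lt_div_iff₀ hc0]; exact huc
  have hu1 : u < 1 := by
    have h := mul_le_mul_of_nonneg_left hc2 hu0.le
    have h2 := mul_comm u c
    linarith
  have huM : u * K < M := by
    have h := mul_lt_mul_of_pos_right hucinv hK0
    rw [one_div] at h
    calc u * (K:ℝ) < c⁻¹ * K := h
      _ = M := by
          rw [← hcM]; field_simp
  set r : ℕ := K - M with hr_def
  have hrM : r + M = K := by omega
  have hrcast : ((r:ℕ):ℝ) = (K:ℝ) - M := by
    have h : ((r + M : ℕ):ℝ) = K := by rw [hrM]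
    push_cast at h; linarith
  have hur : ∀ i : ℕ, i < r → u * K < (K:ℝ) - i := by
    intro i hi
    have h : (i:ℝ) + M + 1 ≤ K := by exact_mod_cast (by omega : i + M + 1 ≤ K)
    linarith
  have hcount := count_le K r hK u hu0.le hu1 hur n ∅
  simp only [Finset.empty_union, Finset.card_empty] at hcount
  have hTpos : (0:ℝ) < 2*(1 - u*c) := by linarith
  -- product bound
  have hprod_le : ∏ i ∈ Finset.Ico 0 r, (((K:ℝ)-i) / ((K:ℝ)-i-u*K))
      ≤ Real.exp (u*K*a + u^2*V/(2*(1-u*c))) := by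
    have hfac : ∀ i ∈ Finset.Ico 0 r, (((K:ℝ)-i) / ((K:ℝ)-i-u*K))
        ≤ Real.exp (u*K*((K:ℝ)-i)⁻¹ + (u*K)^2*(((K:ℝ)-i)⁻¹)^2/(2*(1-u*c))) := by
      intro i hi
      have hir : i < r := (Finset.mem_Ico.1 hi).2
      have hKi : (M:ℝ) + 1 ≤ (K:ℝ) - i := by
        have h : (i:ℝ) + M + 1 ≤ K := by exact_mod_cast (by omega : i + M + 1 ≤ K)
        linarith
      have hKipos : (0:ℝ) < (K:ℝ) - i := by linarith
      set x : ℝ := u*K/((K:ℝ)-i) with hx_def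
      clear_value x
      have hx0 : 0 ≤ x := by
        rw [hx_def]; exact div_nonneg (mul_nonneg hu0.le hK0.le) hKipos.le
      have hxuc : x ≤ u*c := by
        rw [hx_def, div_le_iff₀ hKipos]
        calc u*(K:ℝ) = u*c*M := by rw [← hcM]; ring
          _ ≤ u*c*((K:ℝ)-i) :=
            mul_le_mul_of_nonneg_left (by linarith) (mul_nonneg hu0.le hc0.le)
      have hx1 : x < 1 := lt_of_le_of_lt hxuc huc
      have h1x : 1 - x = ((K:ℝ)-i-u*K)/((K:ℝ)-i) := by
        rw [hx_def]; field_simp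
      have heq : (((K:ℝ)-i) / ((K:ℝ)-i-u*K)) = (1 - x)⁻¹ := by
        rw [h1x, inv_div]
      rw [heq]
      calc (1-x)⁻¹ ≤ Real.exp (x + x^2/(2*(1-x))) := aux_inv_le_exp x hx0 hx1
        _ ≤ Real.exp (x + x^2/(2*(1-u*c))) := by
            apply Real.exp_le_exp.2
            gcongr
        _ = Real.exp (u*K*((K:ℝ)-i)⁻¹ + (u*K)^2*(((K:ℝ)-i)⁻¹)^2/(2*(1-u*c))) := by
            congr 1
            rw [hx_def]
            ring
    calc ∏ i ∈ Finset.Ico 0 r, (((K:ℝ)-i) / ((K:ℝ)-i-u*K))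
        ≤ ∏ i ∈ Finset.Ico 0 r, Real.exp (u*K*((K:ℝ)-i)⁻¹
            + (u*K)^2*(((K:ℝ)-i)⁻¹)^2/(2*(1-u*c))) := by
          apply Finset.prod_le_prod _ hfac
          intro i hi
          have hir : i < r := (Finset.mem_Ico.1 hi).2
          have hd := hur i hir
          have h0 : (0:ℝ) ≤ u*K := mul_nonneg hu0.le hK0.le
          exact div_nonneg (by linarith) (by linarith)
      _ = Real.exp (∑ i ∈ Finset.Ico 0 r, (u*K*((K:ℝ)-i)⁻¹
            + (u*K)^2*(((K:ℝ)-i)⁻¹)^2/(2*(1-u*c)))) := (Real.exp_sum _ _).symm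
      _ ≤ Real.exp (u*K*a + u^2*V/(2*(1-u*c))) := by
          apply Real.exp_le_exp.2
          rw [Finset.sum_add_distrib, ← Finset.mul_sum, ← Finset.sum_div, ← Finset.mul_sum]
          have hrange : Finset.Ico 0 r = Finset.range r := by
            rw [Finset.range_eq_Ico]
          rw [hrange]
          have hH := aux_harmonic K M hM r (by omega)
          have hH2 := aux_harmonic_sq K M hM r (by omega)
          have hKr : (K:ℝ) - r = M := by rw [hrcast]; ring
          rw [hKr] at hH hH2
          have hterm1 : u*K*(∑ i ∈ Finset.range r, ((K:ℝ)-i)⁻¹) ≤ u*K*a := by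
            apply mul_le_mul_of_nonneg_left _ (mul_nonneg hu0.le hK0.le)
            have hac : a = Real.log K - Real.log M := by
              rw [ha_def, hψ, one_div, inv_div, Real.log_div (ne_of_gt hK0) (ne_of_gt hM0)]
            rw [hac]; exact hH
          have hterm2 : (u*K)^2 * (∑ i ∈ Finset.range r, (((K:ℝ)-i)⁻¹)^2) ≤ u^2*V := by
            have h1 : (1:ℝ) - (M:ℝ)/K ≤ a := by
              have h := Real.log_le_sub_one_of_pos hψ0
              rw [ha_def, one_div, Real.log_inv]
              rw [hψ] at h ⊢
              linarith
            have h2 : (M:ℝ)⁻¹ - (K:ℝ)⁻¹ ≤ a/M := by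
              have he : (M:ℝ)⁻¹ - (K:ℝ)⁻¹ = (1 - (M:ℝ)/K)/M := by
                field_simp
              rw [he]
              gcongr
            calc (u*K)^2 * (∑ i ∈ Finset.range r, (((K:ℝ)-i)⁻¹)^2)
                ≤ (u*K)^2 * ((M:ℝ)⁻¹ - (K:ℝ)⁻¹) :=
                  mul_le_mul_of_nonneg_left hH2 (sq_nonneg _)
              _ ≤ (u*K)^2 * (a/M) := mul_le_mul_of_nonneg_left h2 (sq_nonneg _)
              _ = u^2*V := by rw [hV_def]; ring
          have hdiv := (div_le_div_iff_of_pos_right hTpos).2 hterm2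
          linarith
  -- power bound
  have h1u0 : (0:ℝ) ≤ 1 - u := by linarith
  have hpow : (1-u)^n ≤ Real.exp (-(u*n)) := by
    calc (1-u)^n ≤ (Real.exp (-u))^n := by
          apply pow_le_pow_left₀ h1u0
          linarith [Real.add_one_le_exp (-u)]
      _ = Real.exp (-(u*n)) := by
          rw [← Real.exp_nat_mul]
          congr 1
          ring
  have hδexp : Real.exp (-b) = δ := by
    rw [hb_def, one_div, Real.log_inv, neg_neg, Real.exp_log hδ0]
  -- n lower bound
  have hsV : Real.sqrt (2*V*b) = V*s := by
    have h0 : (0:ℝ) ≤ V*s := mul_nonneg hV.le hs.le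
    rw [show V*s = Real.sqrt ((V*s)^2) from (Real.sqrt_sq h0).symm]
    congr 1
    rw [mul_pow, hs2]
    field_simp
  have hnR : (K:ℝ)*a + c*b + V*s ≤ (n:ℝ) := by
    have hexpr : (K:ℝ)*a + c*b + V*s
        = (K:ℝ)*a + ψ⁻¹*b + Real.sqrt (2*K*ψ⁻¹*a*b) := by
      have hcψ : ψ⁻¹ = c := by rw [hψ, inv_div, hc_def]
      rw [hcψ, ← hsV]
      congr 2
      rw [hV_def, ← hcM]
      field_simp
    rw [hexpr, hn]
    exact Nat.le_ceil _
  -- main scalar inequality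
  have h1uc_eq : 1 - u*c = 1/(1+c*s) := by
    rw [hu_def]
    field_simp
    ring
  have hmain : u*K*a + u^2*V/(2*(1-u*c)) - u*n ≤ -b := by
    have e2 : u^2*V/(2*(1-u*c)) = b/(1+c*s) := by
      rw [h1uc_eq, hu_def]
      field_simp
      rw [mul_comm (s^2) V, hVs2]
    have e1 : u*(c*b + V*s) = b + b/(1+c*s) := by
      rw [hu_def]
      rw [div_mul_eq_mul_div, div_eq_iff h1cs.ne', add_mul, div_mul_cancel₀ _ h1cs.ne']
      linear_combination hVs2
    have hun : u*((K:ℝ)*a + c*b + V*s) ≤ u*n := mul_le_mul_of_nonneg_left hnR hu0.le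
    have hdist : u*((K:ℝ)*a + c*b + V*s) = u*K*a + u*(c*b + V*s) := by ring
    linarith [hun, e1, e2, hdist]
  -- failure probability bound
  have hfailbound : ((Finset.univ.filter (fun f : Fin n → Fin K =>
        (Finset.univ.image f).card < r)).card : ℝ) ≤ δ * (K:ℝ)^n := by
    have hprodnn : (0:ℝ) ≤ ∏ i ∈ Finset.Ico 0 r, (((K:ℝ)-i) / ((K:ℝ)-i-u*K)) := by
      apply Finset.prod_nonneg
      intro i hi
      have hir : i < r := (Finset.mem_Ico.1 hi).2
      have hd := hur i hir
      have h0 : (0:ℝ) ≤ u*K := mul_nonneg hu0.le hK0.le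
      exact div_nonneg (by linarith) (by linarith)
    calc ((Finset.univ.filter (fun f : Fin n → Fin K =>
          (Finset.univ.image f).card < r)).card : ℝ)
        ≤ ((K:ℝ)*(1-u))^n * ∏ i ∈ Finset.Ico 0 r, (((K:ℝ)-i) / ((K:ℝ)-i-u*K)) := hcount
      _ = (K:ℝ)^n * ((1-u)^n * ∏ i ∈ Finset.Ico 0 r, (((K:ℝ)-i) / ((K:ℝ)-i-u*K))) := by
          rw [mul_pow]; ring
      _ ≤ (K:ℝ)^n * (Real.exp (-(u*n)) * Real.exp (u*K*a + u^2*V/(2*(1-u*c)))) := by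
          apply mul_le_mul_of_nonneg_left _ (by positivity)
          exact mul_le_mul hpow hprod_le hprodnn (Real.exp_nonneg _)
      _ = (K:ℝ)^n * Real.exp (u*K*a + u^2*V/(2*(1-u*c)) - u*n) := by
          rw [← Real.exp_add]
          congr 1
          ring
      _ ≤ (K:ℝ)^n * Real.exp (-b) := by
          apply mul_le_mul_of_nonneg_left _ (by positivity)
          exact Real.exp_le_exp.2 hmain
      _ = δ * (K:ℝ)^n := by rw [hδexp]; ring
  -- complement counting
  have hKn : ((Finset.univ : Finset (Fin n → Fin K)).card) = K^n := by
    simp [Finset.card_univ]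
  have hsplit2 := Finset.card_filter_add_card_filter_not
    (s := (Finset.univ : Finset (Fin n → Fin K)))
    (p := fun f => K - M ≤ (Finset.univ.image f).card)
  rw [hKn] at hsplit2
  have hne : (Finset.univ.filter (fun f : Fin n → Fin K =>
      ¬ (K - M ≤ (Finset.univ.image f).card))).card
      = (Finset.univ.filter (fun f : Fin n → Fin K =>
        (Finset.univ.image f).card < r)).card := by
    congr 1
    apply Finset.filter_congr
    intro f _
    rw [not_le, hr_def]
  rw [hne] at hsplit2
  have hKnpos : (0:ℝ) < (K:ℝ)^n := by positivity
  rw [le_div_iff₀ hKnpos]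
  have hcast : ((Finset.univ.filter (fun f : Fin n → Fin K =>
      K - M ≤ (Finset.univ.image f).card)).card : ℝ)
      + ((Finset.univ.filter (fun f : Fin n → Fin K =>
        (Finset.univ.image f).card < r)).card : ℝ) = (K:ℝ)^n := by
    exact_mod_cast congrArg (Nat.cast : ℕ → ℝ) hsplit2
  have hexp : (1-δ)*(K:ℝ)^n = (K:ℝ)^n - δ*(K:ℝ)^n := by ring
  linarith [hfailbound, hcast, hexp]
end
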